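/- arXiv:2203.08070 — 5 statements merged into one kernel-verified Lean document; each statement's English description precedes it below -/
import Mathlib

section
/- If G admits a Γ-switchable homomorphism to H, then for any vertex v of H and any π ∈ Γ, G admits a Γ-switchable homomorphism to H^{(v,π)}. Explicitly: if Σ is a switching sequence and f: G^Σ → H is a homomorphism of (m,n)-mixed graphs, then the same vertex map f gives a homomorphism (G^Σ)^{(X,π)} → H^{(v,π)}, where X = f⁻¹(v). -/
open Equiv

/-- An `(m,n)`-mixed graph (with labelled vertex set `V`): `edge u v = some i` records an
edge `uv` of colour `i` (stored symmetrically) and `arc u v = some j` records an arc from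
`u` to `v` of colour `j`. -/
structure Mixed (V : Type) (m n : ℕ) where
  edge : V → V → Option (Fin m)
  arc : V → V → Option (Fin n)

/-- An element of the switching group `S_m × (S_n ⋉ S_2ⁿ)`: a permutation `α` of the edge
colours together with a permutation `σ` of (arc colour, arc direction) pairs; a pair
`(i, b)` records an arc of colour `i` whose direction agrees (`b = true`) or disagrees
(`b = false`) with a reference orientation. -/
abbrev SwElt (m n : ℕ) := Perm (Fin m) × Perm (Fin n × Bool)

/-- The permutation `σ` of (arc colour, direction) pairs comes from a pair
`(β, γ₁, …, γₙ) ∈ S_n × S_2ⁿ`, i.e. the new arc colour does not depend on the direction: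
`σ (i, d) = (β i, γᵢ d)`. -/
def Consistent {n : ℕ} (σ : Perm (Fin n × Bool)) : Prop :=
  ∀ i : Fin n, (σ (i, true)).1 = (σ (i, false)).1

/-- Given the arc entries `a = arc x y` and `b = arc y x`, the new entry `arc x y`
after acting by `σ` on (colour, direction relative to `(x,y)`) pairs. -/
def arcSwitch {n : ℕ} (σ : Perm (Fin n × Bool)) (a b : Option (Fin n)) : Option (Fin n) :=
  match a with
  | some i => if (σ (i, true)).2 = true then some (σ (i, true)).1 else none
  | none =>
    match b with
    | some i => if (σ (i, false)).2 = true then some (σ (i, false)).1 else none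
    | none => none

/-- Switching the mixed graph `G` at the vertex `v` with respect to `π`: edge colours of
incident edges change by `π.1`, and colours and directions of incident arcs change by
`π.2`. -/
def Mixed.switch {V : Type} [DecidableEq V] {m n : ℕ} (G : Mixed V m n) (v : V)
    (π : SwElt m n) : Mixed V m n where
  edge x y := if x = v ∨ y = v then (G.edge x y).map π.1 else G.edge x y
  arc x y := if x = v ∨ y = v then arcSwitch π.2 (G.arc x y) (G.arc y x) else G.arc x y

/-- Switching with respect to a sequence of (vertex, group element) pairs, in order. -/
def Mixed.switchSeq {V : Type} [DecidableEq V] {m n : ℕ} (G : Mixed V m n) :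
    List (V × SwElt m n) → Mixed V m n
  | [] => G
  | (v, π) :: rest => (G.switch v π).switchSeq rest

/-- All group elements occurring in the sequence belong to `Γ`. -/
def MValid {V : Type} {m n : ℕ} (Γ : Subgroup (SwElt m n))
    (L : List (V × SwElt m n)) : Prop :=
  ∀ p ∈ L, p.2 ∈ Γ

/-- `G` is a bona fide mixed graph: loop-free, edges stored symmetrically, and any pair
of vertices is joined by at most one edge or one arc (but not both). -/
def Mixed.Proper {V : Type} {m n : ℕ} (G : Mixed V m n) : Prop :=
  (∀ x, G.edge x x = none) ∧ (∀ x, G.arc x x = none) ∧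
  (∀ x y, G.edge x y = G.edge y x) ∧
  (∀ x y, (G.edge x y).isSome → G.arc x y = none ∧ G.arc y x = none) ∧
  (∀ x y, (G.arc x y).isSome → G.arc y x = none)

/-- A homomorphism of `(m,n)`-mixed graphs: preserves edges with their colours, and arcs
with their colours and directions. -/
def MHom {V W : Type} {m n : ℕ} (f : V → W) (G : Mixed V m n) (H : Mixed W m n) : Prop :=
  (∀ u v j, G.edge u v = some j → H.edge (f u) (f v) = some j) ∧
  (∀ u v j, G.arc u v = some j → H.arc (f u) (f v) = some j)

/-- A `Γ`-switchable homomorphism of `G` to `H`: a switching sequence on `G` with all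
elements in `Γ`, followed by a homomorphism of mixed graphs. -/
def MSwHom {V W : Type} [DecidableEq V] {m n : ℕ} (Γ : Subgroup (SwElt m n))
    (G : Mixed V m n) (H : Mixed W m n) : Prop :=
  ∃ L, MValid Γ L ∧ ∃ f : V → W, MHom f (G.switchSeq L) H

/-- The (colour, direction) state of the pair `(u,v)` of vertices: `some (i, true)` if
there is an arc `u → v` of colour `i`, `some (i, false)` if there is an arc `v → u` of
colour `i`. -/
def arcPair {V : Type} {m n : ℕ} (G : Mixed V m n) (u v : V) : Option (Fin n × Bool) :=
  match G.arc u v with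
  | some i => some (i, true)
  | none => (G.arc v u).map (fun i => (i, false))

section Aux
variable {V : Type} [DecidableEq V] {m n : ℕ}

def NoD (K : Mixed V m n) : Prop := ∀ x y, (K.arc x y).isSome → K.arc y x = none

lemma consistent_snd {σ : Perm (Fin n × Bool)} (h : Consistent σ) (i : Fin n) :
    (σ (i, false)).2 = !(σ (i, true)).2 := by
  have hne : σ (i, true) ≠ σ (i, false) := by
    intro he; have := σ.injective he; simp at this
  have h1 := h i
  cases hb : (σ (i, true)).2 <;> cases hd : (σ (i, false)).2
  · exact absurd (Prod.ext h1 (hb.trans hd.symm)) hne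
  · rfl
  · rfl
  · exact absurd (Prod.ext h1 (hb.trans hd.symm)) hne

lemma arcPair_eq_true {K : Mixed V m n} {x y : V} {i : Fin n}
    (h : arcPair K x y = some (i, true)) : K.arc x y = some i := by
  unfold arcPair at h
  cases hxy : K.arc x y <;> simp [hxy] at h <;> simp [h]

lemma arcPair_eq_false {K : Mixed V m n} {x y : V} {i : Fin n}
    (h : arcPair K x y = some (i, false)) : K.arc x y = none ∧ K.arc y x = some i := by
  unfold arcPair at h
  rcases hxy : K.arc x y with _ | j
  · rw [hxy] at h
    rcases hyx : K.arc y x with _ | a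
    · rw [hyx] at h; simp at h
    · rw [hyx] at h
      simp only [Option.map_some, Option.some.injEq, Prod.mk.injEq] at h
      exact ⟨rfl, by rw [h.1]⟩
  · rw [hxy] at h; simp at h

lemma arcPair_of_arc {K : Mixed V m n} {x y : V} {j : Fin n}
    (h : K.arc x y = some j) : arcPair K x y = some (j, true) := by
  simp [arcPair, h]

lemma arcPair_switch (K : Mixed V m n) (v : V) (π : SwElt m n) (hc : Consistent π.2)
    (x y : V) (h1 : (K.arc x y).isSome → K.arc y x = none) :
    arcPair (K.switch v π) x y =
      if x = v ∨ y = v then (arcPair K x y).map ⇑π.2 else arcPair K x y := by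
  by_cases h : x = v ∨ y = v
  · have h' : y = v ∨ x = v := h.symm
    cases hxy : K.arc x y with
    | some i =>
      have hyx : K.arc y x = none := h1 (by simp [hxy])
      have hb := consistent_snd hc i
      have hfst := hc i
      simp only [arcPair, Mixed.switch, if_pos h, if_pos h', hxy, hyx, arcSwitch]
      cases ht : (π.2 (i, true)).2
      · rw [ht] at hb
        simp only [hb, ht, Bool.not_false, Bool.false_eq_true, if_false, if_true,
          Option.map_some]
        have : π.2 (i, true) = ((π.2 (i, false)).1, false) := by
          rw [← hfst]; exact Prod.ext rfl ht
        simp [this]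
      · simp only [ht, if_true, Option.map_some]
        have : π.2 (i, true) = ((π.2 (i, true)).1, true) := Prod.ext rfl ht
        rw [this]
    | none =>
      cases hyx : K.arc y x with
      | none => simp [arcPair, Mixed.switch, if_pos h, if_pos h', hxy, hyx, arcSwitch]
      | some i =>
        have hb := consistent_snd hc i
        have hfst := hc i
        simp only [arcPair, Mixed.switch, if_pos h, if_pos h', hxy, hyx, arcSwitch]
        cases hf : (π.2 (i, false)).2
        · have ht : (π.2 (i, true)).2 = true := by
            rw [hf] at hb
            cases hT : (π.2 (i, true)).2
            · rw [hT] at hb; simp at hb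
            · rfl
          simp only [hf, ht, Bool.false_eq_true, if_false, if_true, Option.map_some]
          have : π.2 (i, false) = ((π.2 (i, true)).1, false) := by
            rw [hfst]; exact Prod.ext rfl hf
          simp [this]
        · simp only [hf, if_true, Option.map_some]
          have : π.2 (i, false) = ((π.2 (i, false)).1, true) := Prod.ext rfl hf
          rw [this]
  · simp [arcPair, Mixed.switch, if_neg h, if_neg (fun hh : y = v ∨ x = v => h hh.symm)]

lemma NoD_switch {K : Mixed V m n} (hK : NoD K) (v : V) (π : SwElt m n)
    (hc : Consistent π.2) : NoD (K.switch v π) := by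
  intro x y hxy
  by_cases h : x = v ∨ y = v
  · have h' : y = v ∨ x = v := h.symm
    simp only [Mixed.switch, if_pos h, if_pos h'] at hxy ⊢
    cases hxy' : K.arc x y with
    | some i =>
      have hyx : K.arc y x = none := hK x y (by simp [hxy'])
      have hb := consistent_snd hc i
      rw [hxy'] at hxy
      simp only [hxy', hyx, arcSwitch] at hxy ⊢
      cases ht : (π.2 (i, true)).2
      · simp [ht] at hxy
      · rw [ht] at hb; simp [hb]
    | none =>
      cases hyx : K.arc y x with
      | none => simp [hxy', hyx, arcSwitch]
      | some i =>
        have hb := consistent_snd hc i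
        rw [hxy', hyx] at hxy
        simp only [hxy', hyx, arcSwitch] at hxy ⊢
        cases hf : (π.2 (i, false)).2
        · simp [hf] at hxy
        · have ht2 : (π.2 (i, true)).2 = false := by
            rw [hf] at hb
            cases hT : (π.2 (i, true)).2
            · rfl
            · rw [hT] at hb; simp at hb
          simp [ht2]
  · have h' : ¬(y = v ∨ x = v) := fun hh => h hh.symm
    simp only [Mixed.switch, if_neg h, if_neg h'] at hxy ⊢
    exact hK x y hxy

lemma NoD_switchSeq {K : Mixed V m n} (hK : NoD K) (l : List V) (π : SwElt m n)
    (hc : Consistent π.2) : NoD (K.switchSeq (l.map (fun w => (w, π)))) := by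
  induction l generalizing K with
  | nil => exact hK
  | cons a t ih => exact ih (NoD_switch hK a π hc)

lemma edge_switchSeq (π : SwElt m n) (l : List V) (K : Mixed V m n) (x y : V) :
    (K.switchSeq (l.map (fun w => (w, π)))).edge x y =
      (K.edge x y).map ⇑(π.1 ^ l.countP (fun w => decide (x = w ∨ y = w))) := by
  induction l generalizing K with
  | nil => simp [Mixed.switchSeq]
  | cons a t ih =>
    simp only [List.map_cons, Mixed.switchSeq, ih, List.countP_cons]
    by_cases h : x = a ∨ y = a
    · have : (K.switch a π).edge x y = (K.edge x y).map ⇑π.1 := by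
        simp [Mixed.switch, if_pos h]
      rw [this, Option.map_map]
      have hd : decide (x = a ∨ y = a) = true := by simpa using h
      rw [hd]
      simp only [if_true, pow_succ, Perm.coe_mul]
    · have : (K.switch a π).edge x y = K.edge x y := by
        simp [Mixed.switch, if_neg h]
      rw [this]
      have hd : decide (x = a ∨ y = a) = false := by simpa using h
      rw [hd]
      simp

lemma arcPair_switchSeq (π : SwElt m n) (hc : Consistent π.2) (l : List V)
    (K : Mixed V m n) (hK : NoD K) (x y : V) :
    arcPair (K.switchSeq (l.map (fun w => (w, π)))) x y =
      (arcPair K x y).map ⇑(π.2 ^ l.countP (fun w => decide (x = w ∨ y = w))) := by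
  induction l generalizing K with
  | nil => simp [Mixed.switchSeq]
  | cons a t ih =>
    simp only [List.map_cons, Mixed.switchSeq, List.countP_cons]
    rw [ih _ (NoD_switch hK a π hc)]
    rw [arcPair_switch K a π hc x y (hK x y)]
    by_cases h : x = a ∨ y = a
    · have hd : decide (x = a ∨ y = a) = true := by simpa using h
      rw [if_pos h, hd, Option.map_map]
      simp only [if_true, pow_succ, Perm.coe_mul]
    · have hd : decide (x = a ∨ y = a) = false := by simpa using h
      rw [if_neg h, hd]
      simp

lemma countP_or_nodup : ∀ l : List V, l.Nodup → ∀ x y : V,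
    l.countP (fun w => decide (x = w ∨ y = w)) =
      (if x ∈ l then 1 else 0) + (if y ∈ l ∧ x ≠ y then 1 else 0) := by
  intro l hl x y
  induction l with
  | nil => simp
  | cons a t ih =>
    have hat := List.nodup_cons.mp hl
    have iht := ih hat.2
    rw [List.countP_cons]
    by_cases hx : x = a <;> by_cases hy : y = a <;>
      simp_all [List.mem_cons] <;> split_ifs <;> simp_all <;> omega

lemma switchSeq_append (G : Mixed V m n) (L M : List (V × SwElt m n)) :
    G.switchSeq (L ++ M) = (G.switchSeq L).switchSeq M := by
  induction L generalizing G with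
  | nil => rfl
  | cons p t ih => cases p; simp [Mixed.switchSeq, ih]

end Aux

/-- If `f : G^Σ → H` is a homomorphism, `v ∈ V(H)` and `π ∈ Γ`, then the
same vertex map is a homomorphism `(G^Σ)^{(X,π)} → H^{(v,π)}` where `X = f⁻¹(v)`; in
particular `G` admits a `Γ`-switchable homomorphism to `H^{(v,π)}`. -/
theorem swhom_target_switch {V W : Type} [Fintype V] [DecidableEq V] [DecidableEq W]
    {m n : ℕ} (Γ : Subgroup (SwElt m n)) (hΓ : ∀ p ∈ Γ, Consistent p.2)
    (G : Mixed V m n) (H : Mixed W m n) (hH : H.Proper)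
    (L : List (V × SwElt m n)) (hL : MValid Γ L) (f : V → W)
    (hhom : MHom f (G.switchSeq L) H) (v : W) (π : SwElt m n) (hπ : π ∈ Γ) :
    MHom f ((G.switchSeq L).switchSeq
        (((Finset.univ.filter (fun x => f x = v)).toList).map (fun x => (x, π))))
      (H.switch v π)
    ∧ MSwHom Γ G (H.switch v π) := by
  obtain ⟨he, ha⟩ := hhom
  set G' := G.switchSeq L with hG'
  set l := (Finset.univ.filter (fun x => f x = v)).toList with hldef
  have hlnd : l.Nodup := Finset.nodup_toList _
  have hmem : ∀ w : V, w ∈ l ↔ f w = v := by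
    intro w; simp [hldef]
  have hcons : Consistent π.2 := hΓ π hπ
  have hnod : NoD G' := by
    intro x y hxy
    rcases Option.isSome_iff_exists.mp hxy with ⟨j, hj⟩
    by_contra hne
    rcases Option.ne_none_iff_exists'.mp hne with ⟨j', hj'⟩
    have h1 := ha x y j hj
    have h2 := ha y x j' hj'
    have h3 := hH.2.2.2.2 (f x) (f y) (by simp [h1])
    rw [h3] at h2
    cases h2
  have hcount : ∀ x y : V, l.countP (fun w => decide (x = w ∨ y = w)) =
      (if f x = v then 1 else 0) + (if f y = v ∧ x ≠ y then 1 else 0) := by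
    intro x y
    rw [countP_or_nodup l hlnd x y]
    simp [hmem]
  have main : MHom f (G'.switchSeq (l.map (fun x => (x, π)))) (H.switch v π) := by
    constructor
    · intro x y j hj
      rw [edge_switchSeq] at hj
      rcases Option.map_eq_some_iff.mp hj with ⟨i, hi, hij⟩
      rw [hcount] at hij
      show (if f x = v ∨ f y = v then (H.edge (f x) (f y)).map ⇑π.1
            else H.edge (f x) (f y)) = some j
      by_cases hC : f x = v ∧ f y = v ∧ x ≠ y
      · exfalso
        have h2 := he x y i hi
        rw [hC.1, hC.2.1, hH.1 v] at h2
        cases h2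
      · by_cases hx : f x = v ∨ f y = v
        · have hk : (if f x = v then 1 else 0) + (if f y = v ∧ x ≠ y then 1 else 0) = 1 := by
            by_cases h1 : f x = v <;> by_cases h2 : f y = v <;> by_cases h3 : x = y <;>
              simp_all
          rw [hk, pow_one] at hij
          rw [if_pos hx, he x y i hi, Option.map_some, hij]
        · have hk : (if f x = v then 1 else 0) + (if f y = v ∧ x ≠ y then 1 else 0) = 0 := by
            push_neg at hx
            simp [hx.1, hx.2]
          rw [hk, pow_zero] at hij
          simp only [Perm.coe_one, id_eq] at hij
          rw [if_neg hx, he x y i hi, hij]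
    · intro x y j hj
      have hp : arcPair (G'.switchSeq (l.map (fun x => (x, π)))) x y = some (j, true) :=
        arcPair_of_arc hj
      rw [arcPair_switchSeq π hcons l G' hnod x y] at hp
      rcases Option.map_eq_some_iff.mp hp with ⟨p, hp', hpj⟩
      obtain ⟨i, d⟩ := p
      rw [hcount] at hpj
      show (if f x = v ∨ f y = v then arcSwitch π.2 (H.arc (f x) (f y)) (H.arc (f y) (f x))
            else H.arc (f x) (f y)) = some j
      by_cases hC : f x = v ∧ f y = v ∧ x ≠ y
      · exfalso
        cases d
        · obtain ⟨h0, h2⟩ := arcPair_eq_false hp'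
          have h3 := ha y x i h2
          rw [hC.2.1, hC.1, hH.2.1 v] at h3
          cases h3
        · have h3 := ha x y i (arcPair_eq_true hp')
          rw [hC.1, hC.2.1, hH.2.1 v] at h3
          cases h3
      · by_cases hx : f x = v ∨ f y = v
        · have hk : (if f x = v then 1 else 0) + (if f y = v ∧ x ≠ y then 1 else 0) = 1 := by
            by_cases h1 : f x = v <;> by_cases h2 : f y = v <;> by_cases h3 : x = y <;>
              simp_all
          rw [hk, pow_one] at hpj
          rw [if_pos hx]
          cases d
          · obtain ⟨h0, h2⟩ := arcPair_eq_false hp'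
            have hyx := ha y x i h2
            have hfxy : H.arc (f x) (f y) = none :=
              hH.2.2.2.2 (f y) (f x) (by simp [hyx])
            rw [hfxy, hyx]
            simp only [arcSwitch]
            rw [hpj]
            simp
          · have hxy := ha x y i (arcPair_eq_true hp')
            rw [hxy]
            simp only [arcSwitch]
            rw [hpj]
            simp
        · have hk : (if f x = v then 1 else 0) + (if f y = v ∧ x ≠ y then 1 else 0) = 0 := by
            push_neg at hx
            simp [hx.1, hx.2]
          rw [hk, pow_zero] at hpj
          simp only [Perm.coe_one, id_eq, Prod.mk.injEq] at hpj
          obtain ⟨hij, hd⟩ := hpj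
          subst hij; subst hd
          rw [if_neg hx]
          exact ha x y i (arcPair_eq_true hp')
  refine ⟨main, L ++ l.map (fun x => (x, π)), ?_, f, ?_⟩
  · intro p hp
    rcases List.mem_append.mp hp with h | h
    · exact hL p h
    · rcases List.mem_map.mp h with ⟨w, _, hw⟩
      rw [← hw]; exact hπ
  · rw [switchSeq_append]; exact main
end

section
/- For each even cycle length 2k ≥ 4 and each i,j ∈ [m], define j ∼_{2k} i iff the cycle of length 2k with 2k−1 edges of colour i and one edge of colour j is Γ-switch equivalent to a monochromatic cycle of colour i. Then ∼_{2k} is an equivalence relation on [m]. -/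
open Equiv

/-- An `m`-edge-coloured graph on vertex set `V`: `G u v = some i` means there is an
edge `uv` of colour `i` (stored symmetrically), `none` means no edge. -/
abbrev EC (V : Type) (m : ℕ) := V → V → Option (Fin m)

/-- The colouring is stored symmetrically. -/
def ECSymm {V : Type} {m : ℕ} (G : EC V m) : Prop := ∀ u v, G u v = G v u

/-- Switching at a vertex `v` with a permutation `π` of the colours. -/
def ECswitch {V : Type} [DecidableEq V] {m : ℕ} (G : EC V m) (v : V) (π : Perm (Fin m)) :
    EC V m :=
  fun x y => if x = v ∨ y = v then (G x y).map π else G x y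

/-- Switching with respect to a sequence of (vertex, permutation) pairs, applied in order. -/
def ECswitchSeq {V : Type} [DecidableEq V] {m : ℕ} (G : EC V m) :
    List (V × Perm (Fin m)) → EC V m
  | [] => G
  | (v, π) :: rest => ECswitchSeq (ECswitch G v π) rest

/-- All permutations occurring in the sequence belong to the group `Γ`. -/
def ValidSeq {V : Type} {m : ℕ} (Γ : Subgroup (Perm (Fin m)))
    (L : List (V × Perm (Fin m))) : Prop :=
  ∀ p ∈ L, p.2 ∈ Γ

/-- `Γ`-switch equivalence of two `m`-edge-coloured graphs on the same vertex set. -/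
def SwEquiv {V : Type} [DecidableEq V] {m : ℕ} (Γ : Subgroup (Perm (Fin m)))
    (G G' : EC V m) : Prop :=
  ∃ L, ValidSeq Γ L ∧ ECswitchSeq G L = G'

/-- `G` is monochromatic of colour `i`. -/
def Mono {V : Type} {m : ℕ} (G : EC V m) (i : Fin m) : Prop :=
  ∀ u v j, G u v = some j → j = i

/-- `G` admits a `Γ`-switchable homomorphism to `K₂^i` (the single edge of colour `i`). -/
def SwHomK2 {V : Type} [DecidableEq V] {m : ℕ} (Γ : Subgroup (Perm (Fin m)))
    (G : EC V m) (i : Fin m) : Prop :=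
  ∃ L, ValidSeq Γ L ∧ ∃ f : V → Bool,
    ∀ u v j, ECswitchSeq G L u v = some j → f u ≠ f v ∧ j = i

/-- A `Γ`-switchable homomorphism between `m`-edge-coloured graphs. -/
def SwHom {V W : Type} [DecidableEq V] {m : ℕ} (Γ : Subgroup (Perm (Fin m)))
    (G : EC V m) (H : EC W m) : Prop :=
  ∃ L, ValidSeq Γ L ∧ ∃ f : V → W,
    ∀ u v j, ECswitchSeq G L u v = some j → H (f u) (f v) = some j

/-- `Γ` acts transitively on the colour set `[m]`. -/
def TransOn {m : ℕ} (Γ : Subgroup (Perm (Fin m))) : Prop :=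
  ∀ i j : Fin m, ∃ π ∈ Γ, π i = j

/-- `G` is bipartite. -/
def Bip {V : Type} {m : ℕ} (G : EC V m) : Prop :=
  ∃ g : V → Bool, ∀ u v, (G u v).isSome → g u ≠ g v

/-- `G` (its underlying graph) is connected. -/
def Conn {V : Type} {m : ℕ} (G : EC V m) : Prop :=
  ∀ u v : V, Relation.ReflTransGen (fun a b => (G a b).isSome) u v

/-- The `m`-edge-coloured cycle of length `n` on `ZMod n`, where the edge from `x` to
`x + 1` has colour `c x`. -/
def cycleFromFn {m : ℕ} (n : ℕ) (c : ZMod n → Fin m) : EC (ZMod n) m :=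
  fun x y => if y = x + 1 then some (c x) else if x = y + 1 then some (c y) else none

/-- The cycle of length `n` that is nearly monochromatic of colours `(i, j)`:
all edges have colour `i` except the edge from `-1` (that is, `n - 1`) to `0`,
which has colour `j`. -/
def nearCycle {m : ℕ} (n : ℕ) (i j : Fin m) : EC (ZMod n) m :=
  cycleFromFn n (fun x => if x = -1 then j else i)

/-- The monochromatic cycle of length `n` of colour `i`. -/
def monoCycle {m : ℕ} (n : ℕ) (i : Fin m) : EC (ZMod n) m :=
  cycleFromFn n (fun _ => i)

/-- The `Γ`-substitution class `⟨i⟩`: the colours `j` such that the `4`-cycle nearly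
monochromatic of colours `(i, j)` can be switched to be monochromatic of colour `i`. -/
def subClass {m : ℕ} (Γ : Subgroup (Perm (Fin m))) (i : Fin m) : Set (Fin m) :=
  {j | SwEquiv Γ (nearCycle 4 i j) (monoCycle 4 i)}

/-- The underlying simple graph of an `m`-edge-coloured graph. -/
def ECtoSimple {V : Type} {m : ℕ} (G : EC V m) (h : ECSymm G) : SimpleGraph V where
  Adj u v := u ≠ v ∧ (G u v).isSome
  symm := by
    constructor
    intro u v hv
    exact ⟨Ne.symm hv.1, by rw [h v u]; exact hv.2⟩
  loopless := by constructor; intro v hv; exact hv.1 rfl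

/-- The number of edges of an `m`-edge-coloured graph. -/
def edgeCount {V : Type} [Fintype V] {m : ℕ} (G : EC V m) : ℕ :=
  (Finset.univ.filter (fun p : V × V => (G p.1 p.2).isSome)).card / 2

namespace Sim2kAux

variable {m : ℕ}

def cswitch {n : ℕ} (c : ZMod n → Fin m) (v : ZMod n) (π : Perm (Fin m)) : ZMod n → Fin m :=
  fun x => if x = v ∨ x + 1 = v then π (c x) else c x

def cswitchSeq {n : ℕ} (c : ZMod n → Fin m) : List (ZMod n × Perm (Fin m)) → (ZMod n → Fin m)
  | [] => c
  | (v, π) :: rest => cswitchSeq (cswitch c v π) rest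

lemma ECswitch_cycle {n : ℕ} (c : ZMod n → Fin m) (v : ZMod n) (π : Perm (Fin m)) :
    ECswitch (cycleFromFn n c) v π = cycleFromFn n (cswitch c v π) := by
  funext x y
  simp only [ECswitch, cycleFromFn, cswitch]
  by_cases h1 : y = x + 1
  · subst h1
    by_cases h : x = v ∨ x + 1 = v <;> simp [h]
  · by_cases h2 : x = y + 1
    · subst h2
      by_cases h : y = v ∨ y + 1 = v
      · simp [h1, h, or_comm.mpr h]
      · have h' : ¬ (y + 1 = v ∨ y = v) := fun hc => h (or_comm.mp hc)
        simp [h1, h, h']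
    · by_cases h3 : x = v ∨ y = v <;> simp [h1, h2, h3]

lemma ECswitchSeq_cycle {n : ℕ} (L : List (ZMod n × Perm (Fin m))) :
    ∀ c : ZMod n → Fin m, ECswitchSeq (cycleFromFn n c) L = cycleFromFn n (cswitchSeq c L) := by
  induction L with
  | nil => intro c; rfl
  | cons p rest ih =>
    obtain ⟨v, π⟩ := p
    intro c
    show ECswitchSeq (ECswitch (cycleFromFn n c) v π) rest = _
    rw [ECswitch_cycle]
    exact ih _

lemma cycleFromFn_inj {n : ℕ} {c c' : ZMod n → Fin m}
    (h : cycleFromFn n c = cycleFromFn n c') : c = c' := by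
  funext x
  have hx := congrFun (congrFun h x) (x + 1)
  simp only [cycleFromFn, if_pos rfl] at hx
  exact Option.some.inj hx

lemma cswitchSeq_append {n : ℕ} (L₁ L₂ : List (ZMod n × Perm (Fin m))) :
    ∀ c : ZMod n → Fin m, cswitchSeq c (L₁ ++ L₂) = cswitchSeq (cswitchSeq c L₁) L₂ := by
  induction L₁ with
  | nil => intro c; rfl
  | cons p rest ih =>
    obtain ⟨v, π⟩ := p
    intro c
    exact ih _

def invSeq {n : ℕ} (L : List (ZMod n × Perm (Fin m))) : List (ZMod n × Perm (Fin m)) :=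
  (L.map fun p => (p.1, p.2⁻¹)).reverse

lemma cswitch_cancel {n : ℕ} (c : ZMod n → Fin m) (v : ZMod n) (π : Perm (Fin m)) :
    cswitch (cswitch c v π) v π⁻¹ = c := by
  funext x
  simp only [cswitch]
  split_ifs with h <;> simp

lemma cswitchSeq_invSeq {n : ℕ} (L : List (ZMod n × Perm (Fin m))) :
    ∀ c : ZMod n → Fin m, cswitchSeq (cswitchSeq c L) (invSeq L) = c := by
  induction L with
  | nil => intro c; rfl
  | cons p rest ih =>
    obtain ⟨v, π⟩ := p
    intro c
    have hinv : invSeq ((v, π) :: rest) = invSeq rest ++ [(v, π⁻¹)] := by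
      simp [invSeq]
    show cswitchSeq (cswitchSeq (cswitch c v π) rest) (invSeq ((v, π) :: rest)) = c
    rw [hinv, cswitchSeq_append, ih]
    exact cswitch_cancel c v π

lemma validSeq_append {n : ℕ} {Γ : Subgroup (Perm (Fin m))}
    {L₁ L₂ : List (ZMod n × Perm (Fin m))} (h₁ : ValidSeq Γ L₁) (h₂ : ValidSeq Γ L₂) :
    ValidSeq Γ (L₁ ++ L₂) := by
  intro p hp
  rcases List.mem_append.mp hp with h | h
  · exact h₁ p h
  · exact h₂ p h

lemma validSeq_invSeq {n : ℕ} {Γ : Subgroup (Perm (Fin m))}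
    {L : List (ZMod n × Perm (Fin m))} (h : ValidSeq Γ L) : ValidSeq Γ (invSeq L) := by
  intro p hp
  simp only [invSeq, List.mem_reverse, List.mem_map] at hp
  obtain ⟨q, hq, rfl⟩ := hp
  exact inv_mem (h q hq)

end Sim2kAux

namespace Sim2kAux

variable {m : ℕ}

def sgn {n : ℕ} (hn : (2:ℕ) ∣ n) (x : ZMod n) : ℤ :=
  if ZMod.castHom hn (ZMod 2) x = 0 then 1 else -1

lemma sgn_add_sub_one {n : ℕ} (hn : (2:ℕ) ∣ n) (v : ZMod n) :
    sgn hn v + sgn hn (v - 1) = 0 := by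
  unfold sgn
  rw [map_sub, map_one]
  rcases (by decide : ∀ b : ZMod 2, b = 0 ∨ b = 1) ((ZMod.castHom hn (ZMod 2)) v) with hb | hb <;>
    rw [hb] <;> decide

lemma switch_word {n : ℕ} [NeZero n] (hn : (2:ℕ) ∣ n)
    (Γ : Subgroup (Perm (Fin m))) (L : List (ZMod n × Perm (Fin m))) (hL : ValidSeq Γ L) :
    ∀ c : ZMod n → Fin m,
      ∃ w : ZMod n → Γ,
        (cswitchSeq c L = fun x => (w x : Perm (Fin m)) (c x)) ∧
        ∏ x : ZMod n, (Abelianization.of (w x)) ^ (sgn hn x) = 1 := by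
  induction L with
  | nil =>
    intro c
    exact ⟨fun _ => 1, by funext x; simp [cswitchSeq], by simp⟩
  | cons p rest ih =>
    obtain ⟨v, π⟩ := p
    intro c
    have hπ : π ∈ Γ := hL (v, π) List.mem_cons_self
    have hrest : ValidSeq Γ rest := fun q hq => hL q (List.mem_cons_of_mem _ hq)
    have hn2 : 2 ≤ n := Nat.le_of_dvd (Nat.pos_of_ne_zero (NeZero.ne n)) hn
    haveI : Fact (1 < n) := ⟨hn2⟩
    have hv1 : v ≠ v - 1 := by
      intro h
      exact (one_ne_zero : (1 : ZMod n) ≠ 0) (by linear_combination h)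
    set pp : Γ := ⟨π, hπ⟩ with hpp
    set w₀ : ZMod n → Γ := fun x => if x = v ∨ x + 1 = v then pp else 1 with hw₀
    have hcs : cswitch c v π = fun x => ((w₀ x : Perm (Fin m))) (c x) := by
      funext x
      simp only [cswitch, hw₀]
      split_ifs with h <;> simp [hpp]
    obtain ⟨w₁, hw₁, hφ₁⟩ := ih hrest (cswitch c v π)
    refine ⟨fun x => w₁ x * w₀ x, ?_, ?_⟩
    · show cswitchSeq (cswitch c v π) rest = _
      rw [hw₁]
      funext x
      rw [congrFun hcs x]
      simp [Perm.mul_apply]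
    · have hsplit : ∀ x : ZMod n, (Abelianization.of (w₁ x * w₀ x)) ^ sgn hn x
          = (Abelianization.of (w₁ x)) ^ sgn hn x * (Abelianization.of (w₀ x)) ^ sgn hn x := by
        intro x; rw [map_mul, mul_zpow]
      rw [Finset.prod_congr rfl (fun x _ => hsplit x), Finset.prod_mul_distrib, hφ₁, one_mul]
      have hcond : ∀ x : ZMod n, (x = v ∨ x + 1 = v) ↔ (x = v ∨ x = v - 1) := by
        intro x
        exact or_congr_right eq_sub_iff_add_eq.symm
      have hf : ∀ x : ZMod n, (Abelianization.of (w₀ x)) ^ sgn hn x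
          = if x = v ∨ x = v - 1 then (Abelianization.of pp) ^ sgn hn x else 1 := by
        intro x
        by_cases h : x = v ∨ x = v - 1
        · rw [if_pos h, hw₀]
          simp only [if_pos ((hcond x).mpr h)]
        · rw [if_neg h, hw₀]
          simp only [if_neg (fun hc => h ((hcond x).mp hc))]
          simp
      rw [Finset.prod_congr rfl (fun x _ => hf x)]
      have hsub : ∀ x ∈ Finset.univ, x ∉ ({v, v - 1} : Finset (ZMod n)) →
          (if x = v ∨ x = v - 1 then (Abelianization.of pp) ^ sgn hn x else 1) = 1 := by
        intro x _ hx
        rw [if_neg]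
        simpa [Finset.mem_insert, Finset.mem_singleton] using hx
      rw [← Finset.prod_subset (Finset.subset_univ ({v, v - 1} : Finset (ZMod n))) hsub]
      rw [Finset.prod_insert (by simpa [Finset.mem_singleton] using hv1), Finset.prod_singleton]
      rw [if_pos (Or.inl rfl), if_pos (Or.inr rfl)]
      rw [← zpow_add, sgn_add_sub_one hn v, zpow_zero]

def stab (Γ : Subgroup (Perm (Fin m))) (i : Fin m) : Subgroup Γ where
  carrier := {g | (g : Perm (Fin m)) i = i}
  one_mem' := rfl
  mul_mem' := by
    intro a b ha hb
    simp only [Set.mem_setOf_eq] at *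
    rw [Subgroup.coe_mul, Perm.mul_apply, hb, ha]
  inv_mem' := by
    intro a ha
    simp only [Set.mem_setOf_eq] at *
    conv_lhs => rw [← ha]
    exact Equiv.symm_apply_apply _ _

lemma ker_abelianization_of {G : Type*} [Group G] :
    (Abelianization.of : G →* Abelianization G).ker = commutator G := by
  ext g
  rw [MonoidHom.mem_ker]
  exact QuotientGroup.eq_one_iff g

end Sim2kAux

namespace Sim2kAux

open Pointwise

variable {m : ℕ}

lemma rel_to_P {n : ℕ} (hn : (2:ℕ) ∣ n) (hn4 : 4 ≤ n) (Γ : Subgroup (Perm (Fin m)))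
    {i j : Fin m} (h : SwEquiv Γ (nearCycle n i j) (monoCycle n i)) :
    ∃ g ∈ ⁅Γ, Γ⁆, g i = j := by
  haveI : NeZero n := ⟨by omega⟩
  obtain ⟨L, hL, hEq⟩ := h
  unfold nearCycle monoCycle at hEq
  rw [ECswitchSeq_cycle] at hEq
  have hEq' := cycleFromFn_inj hEq
  obtain ⟨w, hw, hφ⟩ := switch_word hn Γ L hL (fun x => if x = (-1 : ZMod n) then j else i)
  rw [hw] at hEq'
  have hwx : ∀ x : ZMod n, (w x : Perm (Fin m)) (if x = (-1 : ZMod n) then j else i) = i :=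
    fun x => congrFun hEq' x
  have hstab : ∀ x : ZMod n, x ≠ -1 → w x ∈ stab Γ i := by
    intro x hx
    have := hwx x
    rwa [if_neg hx] at this
  have hu : (w (-1) : Perm (Fin m)) j = i := by
    have := hwx (-1)
    rwa [if_pos rfl] at this
  set q : Γ →* Abelianization Γ := Abelianization.of with hq
  set Q : Subgroup (Abelianization Γ) := (stab Γ i).map q with hQ
  have hR : (∏ x ∈ Finset.univ.erase (-1 : ZMod n), q (w x) ^ sgn hn x) ∈ Q := by
    apply Subgroup.prod_mem
    intro x hx
    exact zpow_mem (Subgroup.mem_map_of_mem q (hstab x (Finset.mem_erase.mp hx).1)) _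
  have hQmem : q (w (-1)) ^ sgn hn (-1) *
      ∏ x ∈ Finset.univ.erase (-1 : ZMod n), q (w x) ^ sgn hn x = 1 := by
    rw [Finset.mul_prod_erase Finset.univ (fun x => q (w x) ^ sgn hn x)
      (Finset.mem_univ (-1 : ZMod n))]
    exact hφ
  have h1 : q (w (-1)) ^ sgn hn (-1) ∈ Q := by
    rw [eq_inv_of_mul_eq_one_left hQmem]
    exact inv_mem hR
  have huQ : q (w (-1)) ∈ Q := by
    unfold sgn at h1
    split_ifs at h1 with hs
    · rwa [zpow_one] at h1
    · rw [zpow_neg, zpow_one] at h1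
      exact (Subgroup.inv_mem_iff Q).mp h1
  have hmem : w (-1) ∈ stab Γ i ⊔ commutator Γ := by
    have hc : w (-1) ∈ Subgroup.comap q Q := huQ
    rw [hQ, Subgroup.comap_map_eq, hq, ker_abelianization_of] at hc
    exact hc
  have hmem' : (w (-1) : Γ) ∈ ((stab Γ i : Set Γ) * (commutator Γ : Set Γ)) := by
    rw [← Subgroup.mul_normal]
    exact hmem
  obtain ⟨a, ha, b, hb, hab⟩ := Set.mem_mul.mp hmem'
  have hbj : ((b : Perm (Fin m))) j = i := by
    apply (a : Perm (Fin m)).injective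
    have h1 : ((a : Perm (Fin m))) (((b : Perm (Fin m))) j) = i := by
      have : ((a * b : Γ) : Perm (Fin m)) j = i := by rw [hab]; exact hu
      simpa [Perm.mul_apply] using this
    rw [h1, ha]
  have hmapb : (b : Perm (Fin m)) ∈ ⁅Γ, Γ⁆ := by
    have hmap : Subgroup.map Γ.subtype (commutator Γ) = ⁅Γ, Γ⁆ := by
      rw [commutator_def, Subgroup.map_commutator]
      congr 1 <;>
        rw [← MonoidHom.range_eq_map, Subgroup.subtype_range]
    rw [← hmap]
    exact Subgroup.mem_map_of_mem _ hb
  refine ⟨(b : Perm (Fin m))⁻¹, inv_mem hmapb, ?_⟩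
  apply (b : Perm (Fin m)).injective
  rw [← hbj]
  exact Equiv.apply_symm_apply _ _

end Sim2kAux

namespace Sim2kAux

variable {m : ℕ}

lemma P_to_rel {n : ℕ} (hn4 : 4 ≤ n) (Γ : Subgroup (Perm (Fin m)))
    {i j : Fin m} (h : ∃ g ∈ ⁅Γ, Γ⁆, g i = j) :
    SwEquiv Γ (nearCycle n i j) (monoCycle n i) := by
  haveI : NeZero n := ⟨by omega⟩
  haveI : Fact (1 < n) := ⟨by omega⟩
  have h10 : (1 : ZMod n) ≠ 0 := one_ne_zero
  have h20 : (2 : ZMod n) ≠ 0 := by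
    have hc : ((2 : ℕ) : ZMod n) ≠ 0 := by
      intro hz
      have hval := ZMod.val_cast_of_lt (show 2 < n by omega)
      rw [hz, ZMod.val_zero] at hval
      omega
    simpa using hc
  have ne1 : (-1 : ZMod n) ≠ 0 := fun hz => h10 (by rwa [neg_eq_zero] at hz)
  have ne2 : (-2 : ZMod n) ≠ 0 := fun hz => h20 (by rwa [neg_eq_zero] at hz)
  have ne3 : (-2 : ZMod n) ≠ -1 := fun hz => h10 (by linear_combination -hz)
  have ne4 : (0 : ZMod n) ≠ -1 := fun hz => h10 (by linear_combination hz)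
  have e1 : (-1 : ZMod n) + 1 = 0 := by ring
  have e2 : (-2 : ZMod n) + 1 = -1 := by ring
  obtain ⟨g, hg, hgi⟩ := h
  suffices Qp : ∀ g' ∈ (⁅Γ, Γ⁆ : Subgroup (Perm (Fin m))), ∃ L : List (ZMod n × Perm (Fin m)),
      ValidSeq Γ L ∧ ∀ c : ZMod n → Fin m,
        cswitchSeq c L = fun x => if x = -1 then g' (c x) else c x by
    obtain ⟨L, hL, hact⟩ := Qp g⁻¹ (inv_mem hg)
    refine ⟨L, hL, ?_⟩
    show ECswitchSeq (cycleFromFn n _) L = cycleFromFn n _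
    rw [ECswitchSeq_cycle, hact]
    have hcol : (fun x : ZMod n => if x = -1 then g⁻¹ (if x = -1 then j else i)
        else if x = -1 then j else i) = fun _ => i := by
      funext x
      by_cases hx : x = (-1 : ZMod n)
      · rw [if_pos hx, if_pos hx, ← hgi]
        exact Equiv.symm_apply_apply _ _
      · rw [if_neg hx, if_neg hx]
    rw [hcol]
  intro g' hg'
  rw [Subgroup.commutator_def] at hg'
  refine Subgroup.closure_induction ?_ ?_ ?_ ?_ hg'
  · -- generators: commutators
    rintro x ⟨p, hp, q, hq, rfl⟩
    refine ⟨[((0 : ZMod n), q⁻¹), ((-1 : ZMod n), p⁻¹), ((0 : ZMod n), q), ((-1 : ZMod n), p)],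
      ?_, ?_⟩
    · intro r hr
      simp only [List.mem_cons, List.not_mem_nil, or_false] at hr
      rcases hr with rfl | rfl | rfl | rfl
      · exact inv_mem hq
      · exact inv_mem hp
      · exact hq
      · exact hp
    · intro c
      funext x
      show cswitch (cswitch (cswitch (cswitch c 0 q⁻¹) (-1) p⁻¹) 0 q) (-1) p x = _
      simp only [cswitch]
      by_cases hx1 : x = (-1 : ZMod n)
      · subst hx1
        simp only [if_pos (show (-1 : ZMod n) = 0 ∨ (-1 : ZMod n) + 1 = 0 from Or.inr e1),
          if_pos (show (-1 : ZMod n) = -1 ∨ (-1 : ZMod n) + 1 = -1 from Or.inl rfl),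
          if_pos (rfl : (-1 : ZMod n) = -1)]
        simp [commutatorElement_def, Perm.mul_apply]
      · by_cases hx2 : x = (-2 : ZMod n)
        · subst hx2
          have hA : ¬ ((-2 : ZMod n) = 0 ∨ (-2 : ZMod n) + 1 = 0) := by
            rintro (hz | hz)
            · exact ne2 hz
            · rw [e2] at hz; exact ne1 hz
          simp only [if_neg hA,
            if_pos (show (-2 : ZMod n) = -1 ∨ (-2 : ZMod n) + 1 = -1 from Or.inr e2),
            if_neg ne3]
          simp
        · by_cases hx3 : x = (0 : ZMod n)
          · subst hx3
            have hB : ¬ ((0 : ZMod n) = -1 ∨ (0 : ZMod n) + 1 = -1) := by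
              rintro (hz | hz)
              · exact ne4 hz
              · exact h20 (by linear_combination hz)
            simp only [if_pos (show (0 : ZMod n) = 0 ∨ (0 : ZMod n) + 1 = 0 from Or.inl rfl),
              if_neg hB, if_neg ne4]
            simp
          · have hA : ¬ (x = 0 ∨ x + 1 = 0) := by
              rintro (hz | hz)
              · exact hx3 hz
              · exact hx1 (by linear_combination hz)
            have hB : ¬ (x = -1 ∨ x + 1 = -1) := by
              rintro (hz | hz)
              · exact hx1 hz
              · exact hx2 (by linear_combination hz)
            simp only [if_neg hA, if_neg hB, if_neg hx1]
  · -- one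
    refine ⟨[], fun p hp => absurd hp List.not_mem_nil, ?_⟩
    intro c
    funext x
    show c x = _
    by_cases hx : x = (-1 : ZMod n) <;> simp [hx]
  · -- mul
    rintro a b _ _ ⟨L₁, hv₁, ha⟩ ⟨L₂, hv₂, hb⟩
    refine ⟨L₂ ++ L₁, validSeq_append hv₂ hv₁, ?_⟩
    intro c
    rw [cswitchSeq_append, hb c, ha]
    funext x
    by_cases hx : x = (-1 : ZMod n) <;> simp [hx, Perm.mul_apply]
  · -- inv
    rintro a _ ⟨L, hv, ha⟩
    refine ⟨invSeq L, validSeq_invSeq hv, ?_⟩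
    intro c
    set c' : ZMod n → Fin m := fun z => if z = -1 then a⁻¹ (c z) else c z with hc'
    have hfix : cswitchSeq c' L = c := by
      rw [ha c']
      funext z
      by_cases hz : z = (-1 : ZMod n) <;> simp [hc', hz]
    rw [← hfix, cswitchSeq_invSeq]

end Sim2kAux


/-- For each even cycle length `2k ≥ 4`, the relation `j ∼_{2k} i`
("the nearly monochromatic cycle of colours `(i,j)` of length `2k` is `Γ`-switch
equivalent to the monochromatic cycle of colour `i`") is an equivalence relation
on `[m]`. -/
theorem sim2k_equivalence {m : ℕ} (Γ : Subgroup (Perm (Fin m))) (htr : TransOn Γ)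
    (k : ℕ) (hk : 2 ≤ k) :
    Equivalence (fun j i : Fin m =>
      SwEquiv Γ (nearCycle (2 * k) i j) (monoCycle (2 * k) i)) := by
  have hn4 : 4 ≤ 2 * k := by omega
  have hn2 : (2 : ℕ) ∣ 2 * k := ⟨k, rfl⟩
  constructor
  · intro i
    exact Sim2kAux.P_to_rel hn4 Γ ⟨1, one_mem _, by simp⟩
  · intro j i h
    obtain ⟨g, hg, hgi⟩ := Sim2kAux.rel_to_P hn2 hn4 Γ h
    refine Sim2kAux.P_to_rel hn4 Γ ⟨g⁻¹, inv_mem hg, ?_⟩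
    rw [← hgi]
    exact Equiv.symm_apply_apply _ _
  · intro a b c hab hbc
    obtain ⟨g₁, hg₁, e₁⟩ := Sim2kAux.rel_to_P hn2 hn4 Γ hab
    obtain ⟨g₂, hg₂, e₂⟩ := Sim2kAux.rel_to_P hn2 hn4 Γ hbc
    exact Sim2kAux.P_to_rel hn4 Γ ⟨g₁ * g₂, mul_mem hg₁ hg₂,
      by rw [Equiv.Perm.mul_apply, e₂, e₁]⟩
end

section
/- The Γ-substitution classes are independent of even cycle length: for every i ∈ [m] and all integers l, k ≥ 2, the equivalence class ⟨i⟩^{2l} = {j : j ∼_{2l} i} equals ⟨i⟩^{2k}, where j ∼_{2k} i means that a cycle of length 2k that is nearly monochromatic of colours (i,j) can be switched to be monochromatic of colour i. -/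
open Equiv

namespace SwAux

variable {m : ℕ}

def moveC {n : ℕ} (c : ZMod n → Fin m) (v : ZMod n) (π : Perm (Fin m)) :
    ZMod n → Fin m :=
  fun x => if x = v ∨ x + 1 = v then π (c x) else c x

def foldC {n : ℕ} (c : ZMod n → Fin m) (L : List (ZMod n × Perm (Fin m))) : ZMod n → Fin m :=
  L.foldl (fun c p => moveC c p.1 p.2) c

lemma ECswitch_cycle {n : ℕ} (c : ZMod n → Fin m) (v : ZMod n) (π : Perm (Fin m)) :
    ECswitch (cycleFromFn n c) v π = cycleFromFn n (moveC c v π) := by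
  funext x y
  simp only [ECswitch, cycleFromFn, moveC]
  by_cases h1 : y = x + 1
  · subst h1
    by_cases h2 : x = v ∨ x + 1 = v <;> simp [h2]
  · by_cases h3 : x = y + 1
    · subst h3
      by_cases h2 : y = v ∨ y + 1 = v
      · rw [if_neg h1, if_pos (Or.symm h2), if_neg h1, if_pos rfl]
        simp [h2]
      · rw [if_neg h1, if_neg (fun h => h2 (Or.symm h)), if_neg h1, if_pos rfl]
        simp [h2]
    · simp [h1, h3]

lemma seq_cycle {n : ℕ} (L : List (ZMod n × Perm (Fin m))) (c : ZMod n → Fin m) :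
    ECswitchSeq (cycleFromFn n c) L = cycleFromFn n (foldC c L) := by
  induction L generalizing c with
  | nil => rfl
  | cons p L ih =>
    obtain ⟨v, π⟩ := p
    simp only [ECswitchSeq, ECswitch_cycle, foldC, List.foldl_cons]
    exact ih _

lemma cycle_inj {n : ℕ} {c c' : ZMod n → Fin m}
    (h : cycleFromFn n c = cycleFromFn n c') : c = c' := by
  funext x
  have := congrFun (congrFun h x) (x + 1)
  simpa [cycleFromFn] using this

lemma swEquiv_iff {n : ℕ} (Γ : Subgroup (Perm (Fin m))) (c c' : ZMod n → Fin m) :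
    SwEquiv Γ (cycleFromFn n c) (cycleFromFn n c') ↔
      ∃ L, ValidSeq Γ L ∧ foldC c L = c' := by
  constructor
  · rintro ⟨L, hL, hfold⟩
    exact ⟨L, hL, cycle_inj ((seq_cycle L c).symm.trans hfold)⟩
  · rintro ⟨L, hL, hfold⟩
    exact ⟨L, hL, (seq_cycle L c).trans (by rw [hfold])⟩

lemma moveC_moveC {n : ℕ} (c : ZMod n → Fin m) (v : ZMod n) (π : Perm (Fin m)) :
    moveC (moveC c v π) v π⁻¹ = c := by
  funext x
  by_cases h : x = v ∨ x + 1 = v <;> simp [moveC, h]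

lemma foldC_rev {n : ℕ} (Γ : Subgroup (Perm (Fin m))) :
    ∀ (L : List (ZMod n × Perm (Fin m))), ValidSeq Γ L → ∀ c : ZMod n → Fin m,
      ∃ L', ValidSeq Γ L' ∧ foldC (foldC c L) L' = c := by
  intro L
  induction L with
  | nil => exact fun _ c => ⟨[], by simp [ValidSeq], rfl⟩
  | cons p L ih =>
    intro hL c
    obtain ⟨L', hL', hfold⟩ := ih (fun q hq => hL q (List.mem_cons_of_mem _ hq)) (moveC c p.1 p.2)
    refine ⟨L' ++ [(p.1, p.2⁻¹)], ?_, ?_⟩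
    · intro q hq
      rcases List.mem_append.mp hq with h | h
      · exact hL' q h
      · simp only [List.mem_singleton] at h
        subst h
        exact Subgroup.inv_mem _ (hL p (List.mem_cons_self))
    · show foldC (foldC c (p :: L)) (L' ++ [(p.1, p.2⁻¹)]) = c
      have : foldC c (p :: L) = foldC (moveC c p.1 p.2) L := rfl
      rw [this, foldC, List.foldl_append, ← foldC, ← foldC, hfold]
      exact moveC_moveC c p.1 p.2

end SwAux

namespace SwAux

open scoped commutatorElement

section Invariant

variable {m : ℕ} (Γ : Subgroup (Perm (Fin m))) (i : Fin m)

/-- The stabilizer of `i` inside `Γ`. -/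
def Hs : Subgroup ↥Γ where
  carrier := {g | (g : Perm (Fin m)) i = i}
  one_mem' := by simp
  mul_mem' := by
    intro a b ha hb
    simp only [Set.mem_setOf_eq] at *
    simp [Subgroup.coe_mul, Perm.mul_apply, ha, hb]
  inv_mem' := by
    intro a ha
    simp only [Set.mem_setOf_eq] at *
    conv_lhs => rw [← ha]
    simp

/-- The abelian invariant group. -/
def θ : ↥Γ →* (Abelianization ↥Γ ⧸ Subgroup.map Abelianization.of (Hs Γ i)) :=
  (QuotientGroup.mk' _).comp Abelianization.of

lemma θ_eq_one_of_mem {g : ↥Γ} (h : g ∈ Hs Γ i) : θ Γ i g = 1 := by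
  apply (QuotientGroup.eq_one_iff _).mpr
  exact Subgroup.mem_map_of_mem _ h

lemma θ_decomp {g : ↥Γ} (hg : θ Γ i g = 1) :
    ∃ h ∈ Hs Γ i, ∃ γ ∈ commutator ↥Γ, g = h * γ := by
  have h1 : Abelianization.of g ∈ Subgroup.map Abelianization.of (Hs Γ i) :=
    (QuotientGroup.eq_one_iff _).mp hg
  obtain ⟨h, hh, hhg⟩ := h1
  refine ⟨h, hh, h⁻¹ * g, ?_, by group⟩
  have h2 : Abelianization.of (h⁻¹ * g) = 1 := by
    rw [map_mul, map_inv, hhg]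
    group
  exact (QuotientGroup.eq_one_iff (N := commutator ↥Γ) (h⁻¹ * g)).mp h2

lemma commutator_list {γ : ↥Γ} (hγ : γ ∈ commutator ↥Γ) :
    ∃ lst : List (↥Γ × ↥Γ), (lst.map fun p => ⁅p.1, p.2⁆).prod = γ := by
  rw [commutator_eq_closure] at hγ
  refine Subgroup.closure_induction ?_ ?_ ?_ ?_ hγ
  · rintro x ⟨a, b, rfl⟩
    exact ⟨[(a, b)], by simp⟩
  · exact ⟨[], rfl⟩
  · rintro x y - - ⟨l1, rfl⟩ ⟨l2, rfl⟩
    exact ⟨l1 ++ l2, by simp⟩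
  · rintro x - ⟨l, rfl⟩
    refine ⟨l.reverse.map Prod.swap, ?_⟩
    induction l with
    | nil => simp
    | cons p l ih =>
      simp only [List.map_cons, List.prod_cons, List.reverse_cons, List.map_append,
        List.prod_append, mul_inv_rev, ih]
      simp [commutatorElement_inv]

end Invariant

end SwAux

namespace SwAux

section Pinv

variable {m : ℕ} (Γ : Subgroup (Perm (Fin m))) (i : Fin m) {n : ℕ}

def Pinv [NeZero n] (hn : 2 ∣ n) (c : ZMod n → Fin m) : Prop :=
  ∃ w : ZMod n → ↥Γ, (∀ x, (w x : Perm (Fin m)) (c x) = i) ∧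
    ∏ x ∈ Finset.univ.filter (fun x => ZMod.castHom hn (ZMod 2) x = 0), θ Γ i (w x) =
    ∏ x ∈ Finset.univ.filter (fun x => ¬ ZMod.castHom hn (ZMod 2) x = 0), θ Γ i (w x)

lemma Pinv_mono [NeZero n] (hn : 2 ∣ n) : Pinv Γ i hn (fun _ => i) := by
  refine ⟨fun _ => 1, by simp, by simp⟩

lemma Pinv_move [NeZero n] (hn : 2 ∣ n) (hn1 : (1 : ZMod n) ≠ 0)
    {c : ZMod n → Fin m} {v : ZMod n} {π : Perm (Fin m)} (hπ : π ∈ Γ)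
    (h : Pinv Γ i hn c) : Pinv Γ i hn (moveC c v π) := by
  obtain ⟨w, hw, hprod⟩ := h
  set pp : ↥Γ := ⟨π, hπ⟩ with hpp
  set φ := ZMod.castHom hn (ZMod 2) with hφ
  refine ⟨fun x => if x = v ∨ x + 1 = v then w x * pp⁻¹ else w x, ?_, ?_⟩
  · intro x
    by_cases hx : x = v ∨ x + 1 = v
    · simp only [moveC, if_pos hx]
      have h1 : ((w x * pp⁻¹ : ↥Γ) : Perm (Fin m)) (π (c x))
          = (w x : Perm (Fin m)) (((pp⁻¹ : ↥Γ) : Perm (Fin m)) (π (c x))) := by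
        simp [Perm.mul_apply]
      have hinv : ((pp⁻¹ : ↥Γ) : Perm (Fin m)) (π (c x)) = c x := by
        simp [hpp]
      rw [h1, hinv]
      exact hw x
    · simp only [moveC, if_neg hx]
      exact hw x
  · have hsub : (v - 1) + 1 = v := by ring
    have hvne : v - 1 ≠ v := by
      intro hh
      exact hn1 (sub_eq_self.mp hh)
    have hcond : ∀ x : ZMod n, (x = v ∨ x + 1 = v) ↔ (x = v ∨ x = v - 1) := by
      intro x
      constructor
      · rintro (rfl | hx)
        · exact Or.inl rfl
        · exact Or.inr (by rw [← hx]; ring)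
      · rintro (rfl | rfl)
        · exact Or.inl rfl
        · exact Or.inr hsub
    have hφsub : φ (v - 1) = φ v + 1 := by
      rw [map_sub, map_one, sub_eq_add_neg, (by decide : (-1 : ZMod 2) = 1)]
    have key : ∀ (P : ZMod n → Prop) (_ : DecidablePred P) (u : ZMod n), P u →
        (u = v ∨ u = v - 1) → (∀ x, P x → (x = v ∨ x = v - 1) → x = u) →
        ∏ x ∈ Finset.univ.filter P, θ Γ i (if x = v ∨ x + 1 = v then w x * pp⁻¹ else w x) =
        (∏ x ∈ Finset.univ.filter P, θ Γ i (w x)) * (θ Γ i pp)⁻¹ := by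
      intro P hP u hPu huv huniq
      have step1 : ∀ x,
          θ Γ i (if x = v ∨ x + 1 = v then w x * pp⁻¹ else w x) =
          θ Γ i (w x) * (if x = v ∨ x = v - 1 then (θ Γ i pp)⁻¹ else 1) := by
        intro x
        by_cases hx : x = v ∨ x + 1 = v
        · rw [if_pos hx, if_pos ((hcond x).mp hx), map_mul, map_inv]
        · rw [if_neg hx, if_neg (fun hc => hx ((hcond x).mpr hc)), mul_one]
      calc ∏ x ∈ Finset.univ.filter P,
              θ Γ i (if x = v ∨ x + 1 = v then w x * pp⁻¹ else w x)
          = ∏ x ∈ Finset.univ.filter P,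
              (θ Γ i (w x) * (if x = v ∨ x = v - 1 then (θ Γ i pp)⁻¹ else 1)) := by
            exact Finset.prod_congr rfl (fun x _ => step1 x)
        _ = (∏ x ∈ Finset.univ.filter P, θ Γ i (w x)) *
              (∏ x ∈ Finset.univ.filter P, (if x = v ∨ x = v - 1 then (θ Γ i pp)⁻¹ else 1)) :=
            Finset.prod_mul_distrib
        _ = (∏ x ∈ Finset.univ.filter P, θ Γ i (w x)) * (θ Γ i pp)⁻¹ := by
            congr 1
            rw [Finset.prod_eq_single_of_mem u
              (Finset.mem_filter.mpr ⟨Finset.mem_univ _, hPu⟩)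
              (fun b hb hbu => if_neg (fun hc => hbu (huniq b (Finset.mem_filter.mp hb).2 hc))),
              if_pos huv]
    by_cases hv : φ v = 0
    · rw [key _ _ v hv (Or.inl rfl)
        (fun x hPx hx => by
          rcases hx with rfl | rfl
          · rfl
          · exfalso
            rw [hφsub, hv] at hPx
            exact (by decide : ¬ ((0 : ZMod 2) + 1 = 0)) hPx),
        key _ _ (v - 1) (by rw [hφsub, hv]; decide) (Or.inr rfl)
        (fun x hPx hx => by
          rcases hx with rfl | rfl
          · exact absurd hv hPx
          · rfl),
        hprod]
    · have hv1 : φ v = 1 := by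
        rcases (by decide : ∀ a : ZMod 2, a = 0 ∨ a = 1) (φ v) with h | h
        · exact absurd h hv
        · exact h
      rw [key _ _ (v - 1) (by rw [hφsub, hv1]; decide) (Or.inr rfl)
        (fun x hPx hx => by
          rcases hx with rfl | rfl
          · exact absurd hv1 (by rw [hPx]; decide)
          · rfl),
        key _ _ v hv (Or.inl rfl)
        (fun x hPx hx => by
          rcases hx with rfl | rfl
          · rfl
          · exfalso
            rw [hφsub, hv1] at hPx
            exact hPx (by decide)),
        hprod]

end Pinv

end SwAux

namespace SwAux

section Pinv2

variable {m : ℕ} (Γ : Subgroup (Perm (Fin m))) (i : Fin m) {n : ℕ}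

lemma Pinv_fold [NeZero n] (hn : 2 ∣ n) (hn1 : (1 : ZMod n) ≠ 0) :
    ∀ L : List (ZMod n × Perm (Fin m)), ValidSeq Γ L → ∀ c : ZMod n → Fin m,
      Pinv Γ i hn c → Pinv Γ i hn (foldC c L) := by
  intro L
  induction L with
  | nil => exact fun _ c h => h
  | cons p L ih =>
    intro hL c h
    have h1 : Pinv Γ i hn (moveC c p.1 p.2) :=
      Pinv_move Γ i hn hn1 (hL p (List.mem_cons_self)) h
    exact ih (fun q hq => hL q (List.mem_cons_of_mem _ hq)) _ h1

lemma Pinv_near [NeZero n] (hn : 2 ∣ n) {j : Fin m}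
    (h : Pinv Γ i hn (fun x => if x = -1 then j else i)) :
    ∃ g : ↥Γ, θ Γ i g = 1 ∧ (g : Perm (Fin m)) j = i := by
  obtain ⟨w, hw, hprod⟩ := h
  set φ := ZMod.castHom hn (ZMod 2) with hφ
  have hneg : φ (-1) = 1 := by
    rw [map_neg, map_one]
    decide
  have hx1 : ∀ x : ZMod n, x ≠ -1 → θ Γ i (w x) = 1 := by
    intro x hx
    apply θ_eq_one_of_mem
    have h2 := hw x
    simp only [] at h2
    rw [if_neg hx] at h2
    exact h2
  have hL : ∏ x ∈ Finset.univ.filter (fun x => φ x = 0), θ Γ i (w x) = 1 := by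
    refine Finset.prod_eq_one ?_
    intro x hx
    refine hx1 x ?_
    intro hx2
    subst hx2
    have h3 := (Finset.mem_filter.mp hx).2
    rw [hneg] at h3
    exact (by decide : ¬ ((1 : ZMod 2) = 0)) h3
  have hR : ∏ x ∈ Finset.univ.filter (fun x => ¬ φ x = 0), θ Γ i (w x) = θ Γ i (w (-1)) := by
    refine Finset.prod_eq_single_of_mem (-1) ?_ ?_
    · exact Finset.mem_filter.mpr ⟨Finset.mem_univ _, by rw [hneg]; decide⟩
    · exact fun b _ hb => hx1 b hb
  refine ⟨w (-1), ?_, ?_⟩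
  · rw [← hR, ← hprod, hL]
  · have h2 := hw (-1)
    simpa using h2

end Pinv2

end SwAux

namespace SwAux

section Track

variable {m : ℕ} {n : ℕ}

/-- time-ordered product of the permutations used at vertex `0`. -/
def Xf : List (ZMod n × Perm (Fin m)) → Perm (Fin m) :=
  List.foldr (fun p a => a * (if p.1 = (0 : ZMod n) then p.2 else 1)) 1

/-- time-ordered product of the permutations used at vertex `1`. -/
def Yf : List (ZMod n × Perm (Fin m)) → Perm (Fin m) :=
  List.foldr (fun p a => a * (if p.1 = (1 : ZMod n) then p.2 else 1)) 1

/-- time-ordered product of all permutations. -/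
def Wf : List (ZMod n × Perm (Fin m)) → Perm (Fin m) :=
  List.foldr (fun p a => a * p.2) 1

lemma Xf_nil : Xf (n := n) (m := m) [] = 1 := rfl
lemma Yf_nil : Yf (n := n) (m := m) [] = 1 := rfl
lemma Wf_nil : Wf (n := n) (m := m) [] = 1 := rfl

lemma Xf_cons (p : ZMod n × Perm (Fin m)) (L : List (ZMod n × Perm (Fin m))) :
    Xf (p :: L) = Xf L * (if p.1 = (0 : ZMod n) then p.2 else 1) := rfl
lemma Yf_cons (p : ZMod n × Perm (Fin m)) (L : List (ZMod n × Perm (Fin m))) :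
    Yf (p :: L) = Yf L * (if p.1 = (1 : ZMod n) then p.2 else 1) := rfl
lemma Wf_cons (p : ZMod n × Perm (Fin m)) (L : List (ZMod n × Perm (Fin m))) :
    Wf (p :: L) = Wf L * p.2 := rfl

lemma foldr_mul_base {α : Type*} (f : α → Perm (Fin m)) (b : Perm (Fin m)) :
    ∀ L : List α, List.foldr (fun p a => a * f p) b L =
      b * List.foldr (fun p a => a * f p) 1 L := by
  intro L
  induction L with
  | nil => simp
  | cons p L ih => simp only [List.foldr_cons, ih]; group

lemma Xf_append (L1 L2 : List (ZMod n × Perm (Fin m))) :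
    Xf (L1 ++ L2) = Xf L2 * Xf L1 := by
  simp only [Xf, List.foldr_append]
  exact foldr_mul_base _ _ L1

lemma Yf_append (L1 L2 : List (ZMod n × Perm (Fin m))) :
    Yf (L1 ++ L2) = Yf L2 * Yf L1 := by
  simp only [Yf, List.foldr_append]
  exact foldr_mul_base _ _ L1

lemma Wf_append (L1 L2 : List (ZMod n × Perm (Fin m))) :
    Wf (L1 ++ L2) = Wf L2 * Wf L1 := by
  simp only [Wf, List.foldr_append]
  exact foldr_mul_base _ _ L1

/-- Key tracking lemma for sequences supported on vertices `0` and `1`. -/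
lemma foldC_support01 [NeZero n] (hn : 4 ≤ n) :
    ∀ (L : List (ZMod n × Perm (Fin m))), (∀ p ∈ L, p.1 = (0 : ZMod n) ∨ p.1 = 1) →
    ∀ c : ZMod n → Fin m, foldC c L = fun x =>
      if x = -1 then Xf L (c x) else if x = 0 then Wf L (c x)
        else if x = 1 then Yf L (c x) else c x := by
  haveI : Fact (1 < n) := ⟨by omega⟩
  have h10 : (1 : ZMod n) ≠ 0 := one_ne_zero
  have h20 : (1 + 1 : ZMod n) ≠ 0 := by
    have : ((2 : ℕ) : ZMod n) = (1 + 1 : ZMod n) := by push_cast; ring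
    rw [← this]
    intro hc
    have := (ZMod.natCast_eq_zero_iff 2 n).mp hc
    have := Nat.le_of_dvd (by norm_num) this
    omega
  have hm10 : (-1 : ZMod n) ≠ 0 := by
    intro hc
    exact h10 (neg_eq_zero.mp hc)
  have hm11 : (-1 : ZMod n) ≠ 1 := by
    intro hc
    apply h20
    linear_combination -hc
  have h01 : (0 : ZMod n) ≠ 1 := fun hc => h10 hc.symm
  intro L
  induction L with
  | nil =>
    intro _ c
    funext x
    simp only [foldC, List.foldl_nil, Xf_nil, Yf_nil, Wf_nil, Perm.one_apply]
    split_ifs <;> rfl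
  | cons p L ih =>
    intro hL c
    obtain ⟨v, π⟩ := p
    have hv : v = (0 : ZMod n) ∨ v = 1 := hL (v, π) (List.mem_cons_self)
    have hstep : foldC c ((v, π) :: L) = foldC (moveC c v π) L := rfl
    rw [hstep, ih (fun q hq => hL q (List.mem_cons_of_mem _ hq)) (moveC c v π)]
    funext x
    rcases hv with rfl | rfl
    · -- vertex 0
      have hX : Xf (((0 : ZMod n), π) :: L) = Xf L * π := by rw [Xf_cons, if_pos rfl]
      have hY : Yf (((0 : ZMod n), π) :: L) = Yf L := by rw [Yf_cons, if_neg h01, mul_one]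
      have hW : Wf (((0 : ZMod n), π) :: L) = Wf L * π := Wf_cons _ _
      rw [hX, hY, hW]
      by_cases hx1 : x = -1
      · subst hx1
        rw [if_pos rfl, if_pos rfl]
        have hmv : moveC c (0 : ZMod n) π (-1) = π (c (-1)) := by
          simp only [moveC]
          rw [if_pos (Or.inr (by ring))]
        rw [hmv, Perm.mul_apply]
      · rw [if_neg hx1, if_neg hx1]
        by_cases hx0 : x = 0
        · subst hx0
          rw [if_pos rfl, if_pos rfl]
          have hmv : moveC c (0 : ZMod n) π 0 = π (c 0) := by
            simp [moveC]
          rw [hmv, Perm.mul_apply]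
        · rw [if_neg hx0, if_neg hx0]
          have hmv : moveC c (0 : ZMod n) π x = c x := by
            simp only [moveC]
            rw [if_neg]
            rintro (rfl | hx)
            · exact hx0 rfl
            · exact hx1 (eq_neg_of_add_eq_zero_left hx)
          rw [hmv]
    · -- vertex 1
      have hX : Xf (((1 : ZMod n), π) :: L) = Xf L := by rw [Xf_cons, if_neg h10, mul_one]
      have hY : Yf (((1 : ZMod n), π) :: L) = Yf L * π := by rw [Yf_cons, if_pos rfl]
      have hW : Wf (((1 : ZMod n), π) :: L) = Wf L * π := Wf_cons _ _
      rw [hX, hY, hW]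
      by_cases hx1 : x = -1
      · subst hx1
        rw [if_pos rfl, if_pos rfl]
        have hmv : moveC c (1 : ZMod n) π (-1) = c (-1) := by
          simp only [moveC]
          rw [if_neg]
          rintro (hx | hx)
          · exact hm11 hx
          · rw [neg_add_cancel] at hx
            exact h01 hx
        rw [hmv]
      · rw [if_neg hx1, if_neg hx1]
        by_cases hx0 : x = 0
        · subst hx0
          rw [if_pos rfl, if_pos rfl]
          have hmv : moveC c (1 : ZMod n) π 0 = π (c 0) := by
            simp only [moveC]
            rw [if_pos (Or.inr (zero_add 1))]
          rw [hmv, Perm.mul_apply]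
        · rw [if_neg hx0, if_neg hx0]
          by_cases hx2 : x = 1
          · subst hx2
            rw [if_pos rfl, if_pos rfl]
            have hmv : moveC c (1 : ZMod n) π 1 = π (c 1) := by
              simp [moveC]
            rw [hmv, Perm.mul_apply]
          · rw [if_neg hx2, if_neg hx2]
            have hmv : moveC c (1 : ZMod n) π x = c x := by
              simp only [moveC]
              rw [if_neg]
              rintro (hx | hx)
              · exact hx2 hx
              · apply hx0
                have h4 : x + 1 = 0 + 1 := by rw [hx, zero_add]
                exact add_right_cancel h4
            rw [hmv]

end Track

end SwAux

namespace SwAux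

open scoped commutatorElement

section Suff

variable {m : ℕ} (Γ : Subgroup (Perm (Fin m))) (i : Fin m) {n : ℕ}

lemma zfacts [NeZero n] (hn : 4 ≤ n) :
    (1 : ZMod n) ≠ 0 ∧ (1 + 1 : ZMod n) ≠ 0 ∧ (-1 : ZMod n) ≠ 0 ∧ (-1 : ZMod n) ≠ 1 := by
  haveI : Fact (1 < n) := ⟨by omega⟩
  have h10 : (1 : ZMod n) ≠ 0 := one_ne_zero
  have h20 : (1 + 1 : ZMod n) ≠ 0 := by
    have h2 : ((2 : ℕ) : ZMod n) = (1 + 1 : ZMod n) := by push_cast; ring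
    rw [← h2]
    intro hc
    have h3 := (ZMod.natCast_eq_zero_iff 2 n).mp hc
    have := Nat.le_of_dvd (by norm_num) h3
    omega
  refine ⟨h10, h20, fun hc => h10 (neg_eq_zero.mp hc), fun hc => h20 (by linear_combination -hc)⟩

def blockOf (p : ↥Γ × ↥Γ) : List (ZMod n × Perm (Fin m)) :=
  [((0 : ZMod n), (↑(p.2⁻¹) : Perm (Fin m))), ((1 : ZMod n), ↑(p.1⁻¹)),
   ((0 : ZMod n), ↑p.2), ((1 : ZMod n), ↑p.1)]

def blocksOf (lst : List (↥Γ × ↥Γ)) : List (ZMod n × Perm (Fin m)) :=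
  (lst.map (blockOf Γ)).flatten

lemma Xf_block (h10 : (1 : ZMod n) ≠ 0) (p : ↥Γ × ↥Γ) : Xf (blockOf (n := n) Γ p) = 1 := by
  simp [blockOf, Xf_cons, Xf_nil, h10]

lemma Yf_block (h01 : (0 : ZMod n) ≠ 1) (p : ↥Γ × ↥Γ) : Yf (blockOf (n := n) Γ p) = 1 := by
  simp [blockOf, Yf_cons, Yf_nil, h01]

lemma Wf_block (p : ↥Γ × ↥Γ) : Wf (blockOf (n := n) Γ p) = ((⁅p.1, p.2⁆ : ↥Γ) : Perm (Fin m)) := by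
  simp [blockOf, Wf_cons, Wf_nil, commutatorElement_def, mul_assoc]

lemma Xf_blocks (h10 : (1 : ZMod n) ≠ 0) (lst : List (↥Γ × ↥Γ)) :
    Xf (blocksOf (n := n) Γ lst) = 1 := by
  induction lst with
  | nil => rfl
  | cons p l ih =>
    show Xf (blockOf (n := n) Γ p ++ blocksOf (n := n) Γ l) = 1
    rw [Xf_append, ih, Xf_block Γ h10, mul_one]

lemma Yf_blocks (h01 : (0 : ZMod n) ≠ 1) (lst : List (↥Γ × ↥Γ)) :
    Yf (blocksOf (n := n) Γ lst) = 1 := by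
  induction lst with
  | nil => rfl
  | cons p l ih =>
    show Yf (blockOf (n := n) Γ p ++ blocksOf (n := n) Γ l) = 1
    rw [Yf_append, ih, Yf_block Γ h01, mul_one]

lemma Wf_blocks (lst : List (↥Γ × ↥Γ)) :
    Wf (blocksOf (n := n) Γ lst) =
      ((((lst.reverse.map fun p => ⁅p.1, p.2⁆).prod : ↥Γ)) : Perm (Fin m)) := by
  induction lst with
  | nil => rfl
  | cons p l ih =>
    show Wf (blockOf (n := n) Γ p ++ blocksOf (n := n) Γ l) = _
    rw [Wf_append, ih, Wf_block Γ]
    simp [List.reverse_cons]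

lemma blocks_valid (lst : List (↥Γ × ↥Γ)) : ValidSeq Γ (blocksOf (n := n) Γ lst) := by
  induction lst with
  | nil => intro p hp; simp [blocksOf] at hp
  | cons p l ih =>
    intro q hq
    rcases List.mem_append.mp hq with h | h
    · simp only [blockOf, List.mem_cons, List.mem_singleton] at h
      rcases h with rfl | rfl | rfl | rfl | h
      · exact SetLike.coe_mem p.2⁻¹
      · exact SetLike.coe_mem p.1⁻¹
      · exact SetLike.coe_mem p.2
      · exact SetLike.coe_mem p.1
      · exact absurd h (List.not_mem_nil)
    · exact ih q h

lemma blocks_supp (lst : List (↥Γ × ↥Γ)) :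
    ∀ p ∈ blocksOf (n := n) Γ lst, p.1 = (0 : ZMod n) ∨ p.1 = 1 := by
  induction lst with
  | nil => intro p hp; simp [blocksOf] at hp
  | cons p l ih =>
    intro q hq
    rcases List.mem_append.mp hq with h | h
    · simp only [blockOf, List.mem_cons, List.mem_singleton] at h
      rcases h with rfl | rfl | rfl | rfl | h
      · exact Or.inl rfl
      · exact Or.inr rfl
      · exact Or.inl rfl
      · exact Or.inr rfl
      · exact absurd h (List.not_mem_nil)
    · exact ih q h

lemma sufficiency [NeZero n] (hn4 : 4 ≤ n) {j : Fin m}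
    (g : ↥Γ) (hθ : θ Γ i g = 1) (hgj : (g : Perm (Fin m)) j = i) :
    SwEquiv Γ (nearCycle n i j) (monoCycle n i) := by
  obtain ⟨h10, h20, hm10, hm11⟩ := zfacts (n := n) hn4
  have h01 : (0 : ZMod n) ≠ 1 := fun hc => h10 hc.symm
  obtain ⟨h, hh, γ, hγ, hg⟩ := θ_decomp Γ i hθ
  obtain ⟨lst, hlst⟩ := commutator_list Γ (Subgroup.inv_mem _ hγ)
  set tailL : List (ZMod n × Perm (Fin m)) :=
    [((0 : ZMod n), (↑g : Perm (Fin m))), ((1 : ZMod n), ↑(h⁻¹))] with htail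
  set L : List (ZMod n × Perm (Fin m)) := blocksOf Γ lst.reverse ++ tailL with hL
  have hXL : Xf L = (↑g : Perm (Fin m)) := by
    rw [hL, Xf_append, Xf_blocks Γ h10, mul_one, htail]
    simp [Xf_cons, Xf_nil, h10]
  have hYL : Yf L = (↑(h⁻¹) : Perm (Fin m)) := by
    rw [hL, Yf_append, Yf_blocks Γ h01, mul_one, htail]
    simp [Yf_cons, Yf_nil, h01]
  have hWL : Wf L = 1 := by
    rw [hL, Wf_append, Wf_blocks Γ, htail]
    have h1 : Wf tailL = (↑(h⁻¹ * g) : Perm (Fin m)) := by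
      rw [htail]
      simp [Wf_cons, Wf_nil, mul_assoc]
    rw [h1, List.reverse_reverse, hlst]
    rw [← Subgroup.coe_mul]
    have : h⁻¹ * g * γ⁻¹ = 1 := by rw [hg]; group
    rw [this, Subgroup.coe_one]
  have hvalid : ValidSeq Γ L := by
    intro p hp
    rcases List.mem_append.mp hp with hq | hq
    · exact blocks_valid Γ lst.reverse p hq
    · simp only [htail, List.mem_cons, List.mem_singleton] at hq
      rcases hq with rfl | rfl | hq
      · exact SetLike.coe_mem g
      · exact SetLike.coe_mem h⁻¹
      · exact absurd hq (List.not_mem_nil)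
  have hsupp : ∀ p ∈ L, p.1 = (0 : ZMod n) ∨ p.1 = 1 := by
    intro p hp
    rcases List.mem_append.mp hp with hq | hq
    · exact blocks_supp Γ lst.reverse p hq
    · simp only [htail, List.mem_cons, List.mem_singleton] at hq
      rcases hq with rfl | rfl | hq
      · exact Or.inl rfl
      · exact Or.inr rfl
      · exact absurd hq (List.not_mem_nil)
  show SwEquiv Γ (cycleFromFn n (fun x => if x = -1 then j else i))
    (cycleFromFn n (fun _ => i))
  rw [swEquiv_iff]
  refine ⟨L, hvalid, ?_⟩
  rw [foldC_support01 hn4 L hsupp]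
  funext x
  by_cases hx1 : x = -1
  · subst hx1
    rw [if_pos rfl]
    rw [hXL, if_pos rfl]
    exact hgj
  · rw [if_neg hx1]
    have hnx : (if x = -1 then j else i) = i := if_neg hx1
    by_cases hx0 : x = 0
    · subst hx0
      rw [if_pos rfl, hWL, hnx, Perm.one_apply]
    · rw [if_neg hx0]
      by_cases hx2 : x = 1
      · subst hx2
        rw [if_pos rfl, hYL, hnx]
        have hhi : (↑h : Perm (Fin m)) i = i := hh
        calc (↑(h⁻¹) : Perm (Fin m)) i = (↑h : Perm (Fin m))⁻¹ i := by
              norm_cast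
          _ = (↑h : Perm (Fin m))⁻¹ ((↑h : Perm (Fin m)) i) := by rw [hhi]
          _ = i := by simp
      · rw [if_neg hx2, hnx]

end Suff

end SwAux

namespace SwAux

section Main

variable {m : ℕ} (Γ : Subgroup (Perm (Fin m))) (i : Fin m) {n : ℕ}

lemma main_iff [NeZero n] (hn2 : 2 ∣ n) (hn4 : 4 ≤ n) (j : Fin m) :
    SwEquiv Γ (nearCycle n i j) (monoCycle n i) ↔
      ∃ g : ↥Γ, θ Γ i g = 1 ∧ (g : Perm (Fin m)) j = i := by
  constructor
  · intro hsw
    have h10 : (1 : ZMod n) ≠ 0 := (zfacts (n := n) hn4).1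
    rw [show nearCycle n i j = cycleFromFn n (fun x => if x = -1 then j else i) from rfl,
        show monoCycle n i = cycleFromFn n (fun _ => i) from rfl, swEquiv_iff] at hsw
    obtain ⟨L, hval, hfold⟩ := hsw
    obtain ⟨L', hval', hfold'⟩ := foldC_rev Γ L hval _
    rw [hfold] at hfold'
    have hmono := Pinv_mono Γ i (n := n) hn2
    have hnear := Pinv_fold Γ i hn2 h10 L' hval' _ hmono
    rw [hfold'] at hnear
    exact Pinv_near Γ i hn2 hnear
  · rintro ⟨g, h1, h2⟩
    exact sufficiency Γ i hn4 g h1 h2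

end Main

end SwAux


/-- The `Γ`-substitution classes are independent of the (even) cycle
length: `⟨i⟩^{2l} = ⟨i⟩^{2k}` for all `l, k ≥ 2`. -/
theorem subclass_length_independent {m : ℕ} (Γ : Subgroup (Perm (Fin m)))
    (htr : TransOn Γ) (i : Fin m) (l k : ℕ) (hl : 2 ≤ l) (hk : 2 ≤ k) :
    {j : Fin m | SwEquiv Γ (nearCycle (2 * l) i j) (monoCycle (2 * l) i)} =
    {j : Fin m | SwEquiv Γ (nearCycle (2 * k) i j) (monoCycle (2 * k) i)} := by
  haveI : NeZero (2 * l) := ⟨by omega⟩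
  haveI : NeZero (2 * k) := ⟨by omega⟩
  ext j
  simp only [Set.mem_setOf_eq]
  rw [SwAux.main_iff Γ i ⟨l, rfl⟩ (by omega) j, SwAux.main_iff Γ i ⟨k, rfl⟩ (by omega) j]
end

section
/- (Hell) Let G be a connected bipartite graph and P a shortest path between two vertices u and v of G. Then G admits a retraction to P, i.e., a graph homomorphism r: G → P with r(x) = x for every vertex x of P. -/
open Equiv

open SimpleGraph

private lemma hell_walk_parity {V : Type} {G : SimpleGraph V} (c : G.Coloring (Fin 2))
    {x y : V} (w : G.Walk x y) : c x = c y ↔ Even w.length := by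
  induction w with
  | nil => simp
  | @cons x b y h q ih =>
    have h1 : c x ≠ c b := c.valid h
    rw [Walk.length_cons, Nat.even_add_one, ← ih]
    revert h1
    generalize c x = a; generalize c b = a'; generalize c y = a''
    revert a a' a''; decide

private lemma hell_dist_getVert_le {V : Type} {G : SimpleGraph V} (hconn : G.Connected) :
    ∀ {u v : V} (p : G.Walk u v) (k : ℕ), G.dist u (p.getVert k) ≤ k := by
  intro u v p
  induction p with
  | nil => intro k; simp [Walk.getVert, dist_self]
  | @cons x b y h q ih =>
    intro k
    cases k with
    | zero => simp [Walk.getVert_zero, dist_self]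
    | succ k =>
      rw [Walk.getVert_cons_succ]
      have h1 : G.dist x b = 1 := dist_eq_one_iff_adj.mpr h
      have := hconn.dist_triangle (u := x) (v := b) (w := q.getVert k)
      have := ih k
      omega

private lemma hell_getVert_dist_le {V : Type} {G : SimpleGraph V} :
    ∀ {u v : V} (p : G.Walk u v) (k : ℕ), G.dist (p.getVert k) v ≤ p.length - k := by
  intro u v p
  induction p with
  | nil => intro k; simp [Walk.getVert, dist_self]
  | @cons x b y h q ih =>
    intro k
    cases k with
    | zero =>
      simpa [Walk.getVert_zero] using dist_le (Walk.cons h q)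
    | succ k =>
      rw [Walk.getVert_cons_succ]
      have := ih k
      simp only [Walk.length_cons]
      omega

private lemma hell_dart_getVert {V : Type} {G : SimpleGraph V} :
    ∀ {u v : V} (p : G.Walk u v) (k : ℕ), k < p.length →
      ∃ d ∈ p.darts, d.toProd = (p.getVert k, p.getVert (k + 1)) := by
  intro u v p
  induction p with
  | nil => simp
  | @cons x b y h q ih =>
    intro k hk
    cases k with
    | zero =>
      refine ⟨⟨(x, b), h⟩, by simp [Walk.darts], ?_⟩
      simp [Walk.getVert_zero, Walk.getVert_cons_succ]
    | succ k =>
      obtain ⟨d, hd, hdp⟩ := ih k (by simp only [Walk.length_cons] at hk; omega)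
      exact ⟨d, by simp [Walk.darts, hd], by rwa [Walk.getVert_cons_succ, Walk.getVert_cons_succ]⟩
open SimpleGraph

/-- **Hell.** A connected bipartite graph retracts onto any shortest path
between two of its vertices. -/
theorem hell_retraction {V : Type} (G : SimpleGraph V) (hconn : G.Connected)
    (hbip : G.Colorable 2) {u v : V} (hne : u ≠ v) (p : G.Walk u v) (hp : p.IsPath)
    (hsp : p.length = G.dist u v) :
    ∃ r : V → V, (∀ x ∈ p.support, r x = x) ∧
      ∀ a b, G.Adj a b →
        ∃ d ∈ p.darts, d.toProd = (r a, r b) ∨ d.toProd = (r b, r a) := by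
  classical
  obtain ⟨c⟩ := hbip
  set n := p.length with hn
  have hn1 : 1 ≤ n := by
    have := hconn.pos_dist_of_ne hne
    omega
  -- parity of distances
  have hpar : ∀ x : V, (G.dist u x) % 2 = 0 ↔ c u = c x := by
    intro x
    obtain ⟨w, hw⟩ := (hconn u x).exists_walk_length_eq_dist
    rw [← hw, ← Nat.even_iff]
    exact (hell_walk_parity c w).symm
  -- distance of getVert
  have hgd : ∀ k, k ≤ n → G.dist u (p.getVert k) = k := by
    intro k hk
    have h1 := hell_dist_getVert_le hconn p k
    have h2 := hell_getVert_dist_le p k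
    have h3 := hconn.dist_triangle (u := u) (v := p.getVert k) (w := v)
    rw [← hsp] at h3
    omega
  set f : V → ℕ := fun x =>
    if G.dist u x ≤ n then G.dist u x
    else if (G.dist u x) % 2 = n % 2 then n else n - 1 with hf
  refine ⟨fun x => p.getVert (f x), ?_, ?_⟩
  · intro x hx
    obtain ⟨k, hk, hkn⟩ := Walk.mem_support_iff_exists_getVert.mp hx
    have hd : G.dist u x = k := by rw [← hk]; exact hgd k hkn
    simp only [hf]
    rw [hd, if_pos hkn, hk]
  · -- key lemma for the oriented case
    have hnp : (G.dist u v) % 2 = n % 2 := by rw [← hsp]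
    have key : ∀ a b, G.Adj a b → G.dist u b = G.dist u a + 1 →
        ∃ d ∈ p.darts, d.toProd = (p.getVert (f a), p.getVert (f b)) ∨
          d.toProd = (p.getVert (f b), p.getVert (f a)) := by
      intro a b hab hd
      set da := G.dist u a with hda
      by_cases hble : da + 1 ≤ n
      · obtain ⟨d, hdm, hdp⟩ := hell_dart_getVert p da (by omega)
        refine ⟨d, hdm, Or.inl ?_⟩
        rw [hdp]
        simp only [hf, ← hda, hd]
        rw [if_pos (by omega), if_pos hble]
      · -- da ≥ n
        obtain ⟨d, hdm, hdp⟩ := hell_dart_getVert p (n - 1) (by omega)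
        have hnn : n - 1 + 1 = n := by omega
        rw [hnn] at hdp
        by_cases hpa : da % 2 = n % 2
        · -- f a = n, f b = n - 1
          refine ⟨d, hdm, Or.inr ?_⟩
          rw [hdp]
          have hfa : f a = n := by
            simp only [hf, ← hda]
            by_cases hle : da ≤ n
            · rw [if_pos hle]; omega
            · rw [if_neg hle, if_pos hpa]
          have hfb : f b = n - 1 := by
            simp only [hf, hd, ← hda]
            rw [if_neg (by omega), if_neg (by omega)]
          rw [hfa, hfb]
        · -- da > n (since dist u v = n has parity n), f a = n-1, f b = n
          have hdan : da ≠ n := by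
            intro h; rw [h] at hpa; exact hpa rfl
          refine ⟨d, hdm, Or.inl ?_⟩
          rw [hdp]
          have hfa : f a = n - 1 := by
            simp only [hf, ← hda]
            rw [if_neg (by omega), if_neg (by omega)]
          have hfb : f b = n := by
            simp only [hf, hd, ← hda]
            rw [if_neg (by omega), if_pos (by omega)]
          rw [hfa, hfb]
    intro a b hab
    -- distances differ by exactly one
    have h1 : G.dist u b ≤ G.dist u a + 1 := by
      have := hconn.dist_triangle (u := u) (v := a) (w := b)
      rw [dist_eq_one_iff_adj.mpr hab] at this
      exact this
    have h2 : G.dist u a ≤ G.dist u b + 1 := by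
      have := hconn.dist_triangle (u := u) (v := b) (w := a)
      rw [dist_eq_one_iff_adj.mpr hab.symm] at this
      exact this
    have hcab : c a ≠ c b := c.valid hab
    have hpne : (G.dist u a) % 2 ≠ (G.dist u b) % 2 := by
      have ha := hpar a
      have hb := hpar b
      have : ¬(c u = c a ↔ c u = c b) := by
        revert hcab
        generalize c u = x; generalize c a = y; generalize c b = z
        revert x y z; decide
      omega
    have : G.dist u b = G.dist u a + 1 ∨ G.dist u a = G.dist u b + 1 := by omega
    rcases this with h | h
    · exact key a b hab h
    · obtain ⟨d, hdm, hdp⟩ := key b a hab.symm h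
      exact ⟨d, hdm, hdp.symm⟩
end

section
/- Let G be a connected m-edge-coloured graph, Γ ≤ S_m transitive, and i ∈ [m]. Then G admits a Γ-switchable homomorphism to K_2^i if and only if G is bipartite and for every spanning tree T of G there exists a switching sequence Σ such that in G^Σ the tree T is monochromatic of colour i and the colour of every cotree edge lies in the Γ-substitution class ⟨i⟩. -/
open Equiv

section SeqPerm
variable {V : Type} [DecidableEq V] {m : ℕ}

/-- total permutation applied to the pair (x,y) by the sequence L. -/
def seqPerm : List (V × Perm (Fin m)) → V → V → Perm (Fin m)
  | [], _, _ => 1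
  | (w, π) :: rest, x, y => seqPerm rest x y * (if x = w ∨ y = w then π else 1)

lemma ECswitchSeq_eq (G : EC V m) (L : List (V × Perm (Fin m))) (x y : V) :
    ECswitchSeq G L x y = (G x y).map (seqPerm L x y) := by
  induction L generalizing G with
  | nil => simp [ECswitchSeq, seqPerm]
  | cons p rest ih =>
    obtain ⟨v, π⟩ := p
    show ECswitchSeq (ECswitch G v π) rest x y = _
    rw [ih, ECswitch]
    by_cases h : x = v ∨ y = v
    · simp only [h, if_true, seqPerm, Option.map_map]
      congr 1
    · simp only [h, if_false, seqPerm, mul_one]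

lemma seqPerm_symm (L : List (V × Perm (Fin m))) (x y : V) :
    seqPerm L x y = seqPerm L y x := by
  induction L with
  | nil => rfl
  | cons p rest ih => simp [seqPerm, ih, or_comm]

lemma seqPerm_mem {Γ : Subgroup (Perm (Fin m))} {L : List (V × Perm (Fin m))}
    (hL : ValidSeq Γ L) (x y : V) : seqPerm L x y ∈ Γ := by
  induction L with
  | nil => exact Γ.one_mem
  | cons p rest ih =>
    refine Γ.mul_mem (ih fun q hq => hL q (List.mem_cons_of_mem _ hq)) ?_
    split
    · exact hL p List.mem_cons_self
    · exact Γ.one_mem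

lemma ECswitchSeq_append (G : EC V m) (L1 L2 : List (V × Perm (Fin m))) :
    ECswitchSeq G (L1 ++ L2) = ECswitchSeq (ECswitchSeq G L1) L2 := by
  induction L1 generalizing G with
  | nil => rfl
  | cons p rest ih => obtain ⟨v, π⟩ := p; exact ih (ECswitch G v π)

lemma seqPerm_append (L1 L2 : List (V × Perm (Fin m))) (x y : V) :
    seqPerm (L1 ++ L2) x y = seqPerm L2 x y * seqPerm L1 x y := by
  induction L1 with
  | nil => simp [seqPerm]
  | cons p rest ih => simp [seqPerm, ih, mul_assoc]

lemma ValidSeq_append {Γ : Subgroup (Perm (Fin m))} {L1 L2 : List (V × Perm (Fin m))}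
    (h1 : ValidSeq Γ L1) (h2 : ValidSeq Γ L2) : ValidSeq Γ (L1 ++ L2) := by
  intro p hp
  rcases List.mem_append.1 hp with h | h
  · exact h1 p h
  · exact h2 p h

end SeqPerm

section Alg
variable {m : ℕ} (Γ : Subgroup (Perm (Fin m))) (i : Fin m)

/-- generators: stabilizer elements of Γ, and commutators of Γ. -/
def SwSet : Set (Perm (Fin m)) :=
  {g | g ∈ Γ ∧ g i = i} ∪ {g | ∃ a b : Perm (Fin m), a ∈ Γ ∧ b ∈ Γ ∧ g = a * b * a⁻¹ * b⁻¹}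

def SwM : Subgroup (Perm (Fin m)) := Subgroup.closure (SwSet Γ i)

def SwK : Subgroup (Abelianization ↥Γ) :=
  Subgroup.closure (Abelianization.of '' {g : ↥Γ | (g : Perm (Fin m)) i = i})

/-- abelianized quotient in which stabilizer elements die. -/
abbrev SwQ := Abelianization ↥Γ ⧸ SwK Γ i

noncomputable def swpsi : ↥Γ →* SwQ Γ i :=
  (QuotientGroup.mk' (SwK Γ i)).comp Abelianization.of

lemma swpsi_stab (g : ↥Γ) (hg : (g : Perm (Fin m)) i = i) : swpsi Γ i g = 1 := by
  have : Abelianization.of g ∈ SwK Γ i :=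
    Subgroup.subset_closure ⟨g, hg, rfl⟩
  exact (QuotientGroup.eq_one_iff (Abelianization.of g)).2 this

lemma swpsi_ker {g : ↥Γ} (hg : swpsi Γ i g = 1) : (g : Perm (Fin m)) ∈ SwM Γ i := by
  have h1 : Abelianization.of g ∈ SwK Γ i := by
    have hg' : QuotientGroup.mk' (SwK Γ i) (Abelianization.of g) = 1 := hg
    exact (QuotientGroup.eq_one_iff (Abelianization.of g)).1 hg'
  -- SwK = map of (closure stab)
  have h2 : SwK Γ i = Subgroup.map Abelianization.of
      (Subgroup.closure {g : ↥Γ | (g : Perm (Fin m)) i = i}) := by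
    rw [MonoidHom.map_closure]; rfl
  rw [h2] at h1
  have h3 : g ∈ Subgroup.comap (Abelianization.of (G := ↥Γ))
      (Subgroup.map Abelianization.of
        (Subgroup.closure {g : ↥Γ | (g : Perm (Fin m)) i = i})) := h1
  rw [Subgroup.comap_map_eq] at h3
  have hker : (Abelianization.of (G := ↥Γ)).ker = commutator ↥Γ := by
    ext x
    constructor
    · intro hx
      exact (QuotientGroup.eq_one_iff x).1 hx
    · intro hx
      exact (QuotientGroup.eq_one_iff x).2 hx
  rw [hker, commutator_eq_closure, ← Subgroup.closure_union] at h3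
  -- now push to Perm via the subtype hom
  have h4 : (g : Perm (Fin m)) ∈ Subgroup.map Γ.subtype
      (Subgroup.closure ({g : ↥Γ | (g : Perm (Fin m)) i = i} ∪ commutatorSet ↥Γ)) :=
    ⟨g, h3, rfl⟩
  rw [MonoidHom.map_closure] at h4
  refine Subgroup.closure_mono ?_ h4
  rintro x ⟨y, hy | hy, rfl⟩
  · exact Or.inl ⟨y.2, hy⟩
  · obtain ⟨a, b, rfl⟩ := hy
    exact Or.inr ⟨(a : Perm (Fin m)), (b : Perm (Fin m)), a.2, b.2, rfl⟩

lemma SwM_le : SwM Γ i ≤ Γ := by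
  rw [SwM, Subgroup.closure_le]
  rintro x (⟨hx, _⟩ | ⟨a, b, ha, hb, rfl⟩)
  · exact hx
  · exact Γ.mul_mem (Γ.mul_mem (Γ.mul_mem ha hb) (Γ.inv_mem ha)) (Γ.inv_mem hb)

variable (htr : ∀ a b : Fin m, ∃ π ∈ Γ, π a = b)

noncomputable def swg (c : Fin m) : ↥Γ :=
  ⟨(htr i c).choose, (htr i c).choose_spec.1⟩

lemma swg_spec (c : Fin m) : ((swg Γ i htr c : ↥Γ) : Perm (Fin m)) i = c :=
  (htr i c).choose_spec.2

noncomputable def swphi (c : Fin m) : SwQ Γ i := swpsi Γ i (swg Γ i htr c)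

lemma swphi_i : swphi Γ i htr i = 1 :=
  swpsi_stab Γ i _ (swg_spec Γ i htr i)

lemma swphi_perm (π : Perm (Fin m)) (hπ : π ∈ Γ) (c : Fin m) :
    swphi Γ i htr (π c) = swpsi Γ i ⟨π, hπ⟩ * swphi Γ i htr c := by
  have key : ((((swg Γ i htr (π c))⁻¹ * (⟨π, hπ⟩ * swg Γ i htr c)) : ↥Γ) : Perm (Fin m)) i = i := by
    push_cast
    simp only [Perm.coe_mul, Function.comp_apply]
    rw [swg_spec Γ i htr c, Perm.inv_def]
    exact (Equiv.symm_apply_eq _).2 (swg_spec Γ i htr (π c)).symm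
  have h1 := swpsi_stab Γ i _ key
  rw [map_mul, map_mul, map_inv] at h1
  have h2 := mul_eq_one_iff_eq_inv.1 h1
  rw [swphi, swphi]
  exact inv_injective h2

lemma swphi_one_exists {j : Fin m} (h : swphi Γ i htr j = 1) :
    ∃ w ∈ SwM Γ i, w j = i := by
  have hg : ((swg Γ i htr j : ↥Γ) : Perm (Fin m)) ∈ SwM Γ i := swpsi_ker Γ i h
  refine ⟨((swg Γ i htr j : ↥Γ) : Perm (Fin m))⁻¹, (SwM Γ i).inv_mem hg, ?_⟩
  have hs := swg_spec Γ i htr j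
  have h2 : ((swg Γ i htr j : ↥Γ) : Perm (Fin m))⁻¹
      (((swg Γ i htr j : ↥Γ) : Perm (Fin m)) i) = i := Equiv.symm_apply_apply _ _
  rwa [hs] at h2

end Alg

section Real
variable {V : Type} [DecidableEq V] {m : ℕ} (Γ : Subgroup (Perm (Fin m))) (i : Fin m)

def GoodPerm (π : Perm (Fin m)) : Prop := π ∈ Γ ∧ π i = i

def Realizes (u v : V) (w : Perm (Fin m)) (L : List (V × Perm (Fin m))) : Prop :=
  ValidSeq Γ L ∧ seqPerm L u v = w ∧
    ∀ x y : V, ¬((x = u ∧ y = v) ∨ (x = v ∧ y = u)) → GoodPerm Γ i (seqPerm L x y)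

lemma goodPerm_one : GoodPerm Γ i 1 := ⟨Γ.one_mem, rfl⟩

lemma realizes_one (u v : V) : Realizes Γ i u v 1 [] :=
  ⟨fun p hp => absurd hp List.not_mem_nil, rfl, fun _ _ _ => goodPerm_one Γ i⟩

lemma realizes_mul {u v : V} {w1 w2 : Perm (Fin m)} {L1 L2 : List (V × Perm (Fin m))}
    (h1 : Realizes Γ i u v w1 L1) (h2 : Realizes Γ i u v w2 L2) :
    Realizes Γ i u v (w1 * w2) (L2 ++ L1) := by
  refine ⟨ValidSeq_append h2.1 h1.1, ?_, ?_⟩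
  · rw [seqPerm_append, h1.2.1, h2.2.1]
  · intro x y hxy
    rw [seqPerm_append]
    obtain ⟨ha1, ha2⟩ := h1.2.2 x y hxy
    obtain ⟨hb1, hb2⟩ := h2.2.2 x y hxy
    exact ⟨Γ.mul_mem ha1 hb1, by simp [Perm.mul_apply, hb2, ha2]⟩

lemma realizes_stab (u v : V) {π : Perm (Fin m)} (hπ : GoodPerm Γ i π) :
    Realizes Γ i u v π [(u, π)] := by
  refine ⟨?_, ?_, ?_⟩
  · intro p hp; rw [List.mem_singleton] at hp; rw [hp]; exact hπ.1
  · simp [seqPerm]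
  · intro x y _
    simp only [seqPerm]
    split
    · simpa using hπ
    · simpa using goodPerm_one Γ i

lemma realizes_comm {u v : V} (huv : u ≠ v) {a b : Perm (Fin m)}
    (ha : a ∈ Γ) (hb : b ∈ Γ) :
    Realizes Γ i u v (a * b * a⁻¹ * b⁻¹) [(u, b⁻¹), (v, a⁻¹), (u, b), (v, a)] := by
  have hval : ValidSeq Γ [(u, b⁻¹), (v, a⁻¹), (u, b), (v, a)] := by
    intro p hp
    simp only [List.mem_cons, List.not_mem_nil, or_false] at hp
    rcases hp with rfl | rfl | rfl | rfl
    · exact Γ.inv_mem hb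
    · exact Γ.inv_mem ha
    · exact hb
    · exact ha
  have key : ∀ x y : V, seqPerm [(u, b⁻¹), (v, a⁻¹), (u, b), (v, a)] x y =
      (if x = v ∨ y = v then a else 1) * (if x = u ∨ y = u then b else 1) *
      (if x = v ∨ y = v then a⁻¹ else 1) * (if x = u ∨ y = u then b⁻¹ else 1) := by
    intro x y
    simp only [seqPerm, one_mul]
  refine ⟨hval, ?_, ?_⟩
  · rw [key]
    simp [huv]
  · intro x y hxy
    rw [key]
    by_cases h1 : x = u ∨ y = u <;> by_cases h2 : x = v ∨ y = v
    · exfalso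
      rcases h1 with h1 | h1 <;> rcases h2 with h2 | h2
      · exact huv (h1.symm.trans h2)
      · exact hxy (Or.inl ⟨h1, h2⟩)
      · exact hxy (Or.inr ⟨h2, h1⟩)
      · exact huv (h1.symm.trans h2)
    · simp only [h1, h2, if_true, if_false]
      simpa using goodPerm_one Γ i
    · simp only [h1, h2, if_true, if_false]
      simpa using goodPerm_one Γ i
    · simp only [h1, h2, if_false]
      simpa using goodPerm_one Γ i

lemma realizes_of_mem_SwM {u v : V} (huv : u ≠ v) {w : Perm (Fin m)} (hw : w ∈ SwM Γ i) :
    ∃ L, Realizes Γ i u v w L := by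
  have hmem : w ∈ Submonoid.closure (SwSet Γ i ∪ (SwSet Γ i)⁻¹) := by
    have := Subgroup.closure_toSubmonoid (SwSet Γ i)
    have hw' : w ∈ (Subgroup.closure (SwSet Γ i)).toSubmonoid := hw
    rwa [this] at hw'
  obtain ⟨l, hl, rfl⟩ := Submonoid.exists_list_of_mem_closure hmem
  clear hmem hw
  induction l with
  | nil => exact ⟨[], realizes_one Γ i u v⟩
  | cons y l ih =>
    obtain ⟨L2, hL2⟩ := ih (fun z hz => hl z (List.mem_cons_of_mem _ hz))
    have hy : y ∈ SwSet Γ i := by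
      rcases hl y List.mem_cons_self with h | h
      · exact h
      · have h' : y⁻¹ ∈ SwSet Γ i := Set.mem_inv.1 h
        rcases h' with ⟨h1, h2⟩ | ⟨c, d, hc, hd, hcd⟩
        · refine Or.inl ⟨by simpa using Γ.inv_mem h1, ?_⟩
          have h3 := congrArg (⇑y) h2
          rw [← Perm.mul_apply, mul_inv_cancel, Perm.one_apply] at h3
          exact h3.symm
        · have hy2 : y = (c * d * c⁻¹ * d⁻¹)⁻¹ := by rw [← hcd, inv_inv]
          refine Or.inr ⟨d, c, hd, hc, ?_⟩
          rw [hy2]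
          group
    have hy1 : ∃ L1, Realizes Γ i u v y L1 := by
      rcases hy with ⟨h1, h2⟩ | ⟨c, d, hc, hd, rfl⟩
      · exact ⟨[(u, y)], realizes_stab Γ i u v ⟨h1, h2⟩⟩
      · exact ⟨_, realizes_comm Γ i huv hc hd⟩
    obtain ⟨L1, hL1⟩ := hy1
    exact ⟨L2 ++ L1, by rw [List.prod_cons]; exact realizes_mul Γ i hL1 hL2⟩

end Real

section Cycle
variable {m : ℕ} (Γ : Subgroup (Perm (Fin m))) (i : Fin m)

lemma two_ne_zero_zmod4 : (1 + 1 : ZMod 4) ≠ 0 := by decide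

lemma cycle_eval (c : ZMod 4 → Fin m) (x : ZMod 4) :
    cycleFromFn 4 c x (x + 1) = some (c x) := by
  simp [cycleFromFn]

lemma cycle_eval_rev (c : ZMod 4 → Fin m) (y : ZMod 4) :
    cycleFromFn 4 c (y + 1) y = some (c y) := by
  have h : ¬ (y = y + 1 + 1) := by
    rw [add_assoc, left_eq_add]; decide
  simp [cycleFromFn, h]

lemma cycle_eval_none (c : ZMod 4 → Fin m) (x y : ZMod 4) (h1 : ¬ y = x + 1)
    (h2 : ¬ x = y + 1) : cycleFromFn 4 c x y = none := by
  simp [cycleFromFn, h1, h2]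

lemma ECswitch_cycle (c : ZMod 4 → Fin m) (v : ZMod 4) (π : Perm (Fin m)) :
    ECswitch (cycleFromFn 4 c) v π =
      cycleFromFn 4 (fun x => if x = v - 1 ∨ x = v then π (c x) else c x) := by
  funext x y
  by_cases h1 : y = x + 1
  · subst h1
    have hcond : (x = v ∨ x + 1 = v) ↔ (x = v - 1 ∨ x = v) := by
      rw [eq_sub_iff_add_eq, or_comm]
    show (if x = v ∨ x + 1 = v then (cycleFromFn 4 c x (x + 1)).map π
        else cycleFromFn 4 c x (x + 1)) = _
    rw [cycle_eval, cycle_eval]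
    by_cases h : x = v ∨ x + 1 = v
    · rw [if_pos h, if_pos (hcond.1 h), Option.map_some]
    · rw [if_neg h, if_neg (fun hh => h (hcond.2 hh))]
  · by_cases h2 : x = y + 1
    · subst h2
      have hcond : (y + 1 = v ∨ y = v) ↔ (y = v - 1 ∨ y = v) := by
        rw [eq_sub_iff_add_eq]
      show (if y + 1 = v ∨ y = v then (cycleFromFn 4 c (y + 1) y).map π
        else cycleFromFn 4 c (y + 1) y) = _
      rw [cycle_eval_rev, cycle_eval_rev]
      by_cases h : y + 1 = v ∨ y = v
      · rw [if_pos h, if_pos (hcond.1 h), Option.map_some]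
      · rw [if_neg h, if_neg (fun hh => h (hcond.2 hh))]
    · show (if x = v ∨ y = v then (cycleFromFn 4 c x y).map π else cycleFromFn 4 c x y) = _
      rw [cycle_eval_none c x y h1 h2, cycle_eval_none _ x y h1 h2]
      split <;> rfl

variable (htr : ∀ a b : Fin m, ∃ π ∈ Γ, π a = b)

noncomputable def PhiC (c : ZMod 4 → Fin m) : SwQ Γ i :=
  swphi Γ i htr (c 0) * (swphi Γ i htr (c 1))⁻¹ * swphi Γ i htr (c 2) *
    (swphi Γ i htr (c 3))⁻¹

lemma conj_cancel (p x : SwQ Γ i) : p * x * p⁻¹ = x := by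
  rw [mul_comm p x, mul_inv_cancel_right]

lemma comm_helper1 (a b c d p : SwQ Γ i) :
    (p * a) * b⁻¹ * c * (p * d)⁻¹ = a * b⁻¹ * c * d⁻¹ := by
  rw [← conj_cancel Γ i p (a * b⁻¹ * c * d⁻¹)]
  simp only [mul_inv_rev, mul_assoc]

lemma comm_helper2 (a b c d p : SwQ Γ i) :
    (p * a) * (p * b)⁻¹ * c * d⁻¹ = a * b⁻¹ * c * d⁻¹ := by
  calc (p * a) * (p * b)⁻¹ * c * d⁻¹ = (p * (a * b⁻¹) * p⁻¹) * (c * d⁻¹) := by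
        simp only [mul_inv_rev, mul_assoc]
    _ = (a * b⁻¹) * (c * d⁻¹) := by rw [conj_cancel]
    _ = a * b⁻¹ * c * d⁻¹ := by simp only [mul_assoc]

lemma comm_helper3 (a b c d p : SwQ Γ i) :
    a * (p * b)⁻¹ * (p * c) * d⁻¹ = a * b⁻¹ * c * d⁻¹ := by
  simp only [mul_inv_rev, mul_assoc, inv_mul_cancel_left]

lemma comm_helper4 (a b c d p : SwQ Γ i) :
    a * b⁻¹ * (p * c) * (p * d)⁻¹ = a * b⁻¹ * c * d⁻¹ := by
  calc a * b⁻¹ * (p * c) * (p * d)⁻¹ = (a * b⁻¹) * (p * (c * d⁻¹) * p⁻¹) := by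
        simp only [mul_inv_rev, mul_assoc]
    _ = (a * b⁻¹) * (c * d⁻¹) := by rw [conj_cancel]
    _ = a * b⁻¹ * c * d⁻¹ := by simp only [mul_assoc]

lemma PhiC_switch (c : ZMod 4 → Fin m) (v : ZMod 4) (π : Perm (Fin m)) (hπ : π ∈ Γ) :
    PhiC Γ i htr (fun x => if x = v - 1 ∨ x = v then π (c x) else c x) = PhiC Γ i htr c := by
  have hv := (by decide : ∀ w : ZMod 4, w = 0 ∨ w = 1 ∨ w = 2 ∨ w = 3) v
  rcases hv with rfl | rfl | rfl | rfl
  · have e0 : ((0 : ZMod 4) = 0 - 1 ∨ (0 : ZMod 4) = 0) := by decide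
    have e1 : ¬((1 : ZMod 4) = 0 - 1 ∨ (1 : ZMod 4) = 0) := by decide
    have e2 : ¬((2 : ZMod 4) = 0 - 1 ∨ (2 : ZMod 4) = 0) := by decide
    have e3 : ((3 : ZMod 4) = 0 - 1 ∨ (3 : ZMod 4) = 0) := by decide
    simp only [PhiC]
    rw [if_pos (show (0 : ZMod 4) = 0 - 1 ∨ True from Or.inr trivial), if_neg e1, if_neg e2,
      if_pos e3, swphi_perm Γ i htr π hπ (c 0), swphi_perm Γ i htr π hπ (c 3)]
    exact comm_helper1 Γ i _ _ _ _ _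
  · have e0 : ((0 : ZMod 4) = 1 - 1 ∨ (0 : ZMod 4) = 1) := by decide
    have e1 : ((1 : ZMod 4) = 1 - 1 ∨ (1 : ZMod 4) = 1) := by decide
    have e2 : ¬((2 : ZMod 4) = 1 - 1 ∨ (2 : ZMod 4) = 1) := by decide
    have e3 : ¬((3 : ZMod 4) = 1 - 1 ∨ (3 : ZMod 4) = 1) := by decide
    simp only [PhiC]
    rw [if_pos e0, if_pos (show (1 : ZMod 4) = 1 - 1 ∨ True from Or.inr trivial), if_neg e2,
      if_neg e3, swphi_perm Γ i htr π hπ (c 0), swphi_perm Γ i htr π hπ (c 1)]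
    exact comm_helper2 Γ i _ _ _ _ _
  · have e0 : ¬((0 : ZMod 4) = 2 - 1 ∨ (0 : ZMod 4) = 2) := by decide
    have e1 : ((1 : ZMod 4) = 2 - 1 ∨ (1 : ZMod 4) = 2) := by decide
    have e2 : ((2 : ZMod 4) = 2 - 1 ∨ (2 : ZMod 4) = 2) := by decide
    have e3 : ¬((3 : ZMod 4) = 2 - 1 ∨ (3 : ZMod 4) = 2) := by decide
    simp only [PhiC]
    rw [if_neg e0, if_pos e1, if_pos (show (2 : ZMod 4) = 2 - 1 ∨ True from Or.inr trivial),
      if_neg e3, swphi_perm Γ i htr π hπ (c 1), swphi_perm Γ i htr π hπ (c 2)]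
    exact comm_helper3 Γ i _ _ _ _ _
  · have e0 : ¬((0 : ZMod 4) = 3 - 1 ∨ (0 : ZMod 4) = 3) := by decide
    have e1 : ¬((1 : ZMod 4) = 3 - 1 ∨ (1 : ZMod 4) = 3) := by decide
    have e2 : ((2 : ZMod 4) = 3 - 1 ∨ (2 : ZMod 4) = 3) := by decide
    have e3 : ((3 : ZMod 4) = 3 - 1 ∨ (3 : ZMod 4) = 3) := by decide
    simp only [PhiC]
    rw [if_neg e0, if_neg e1, if_pos e2, if_pos (show (3 : ZMod 4) = 3 - 1 ∨ True from Or.inr trivial),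
      swphi_perm Γ i htr π hπ (c 2), swphi_perm Γ i htr π hπ (c 3)]
    exact comm_helper4 Γ i _ _ _ _ _

lemma cycleFromFn_inj (c d : ZMod 4 → Fin m) (h : cycleFromFn 4 c = cycleFromFn 4 d) :
    c = d := by
  funext x
  have h2 := congrFun (congrFun h x) (x + 1)
  simp only [cycleFromFn, if_pos rfl] at h2
  exact Option.some_injective _ h2

lemma extract_aux : ∀ (L : List (ZMod 4 × Perm (Fin m))) (c : ZMod 4 → Fin m),
    ValidSeq Γ L → ECswitchSeq (cycleFromFn 4 c) L = monoCycle 4 i →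
    PhiC Γ i htr c = 1 := by
  intro L
  induction L with
  | nil =>
    intro c _ heq
    have := cycleFromFn_inj c (fun _ => i) heq
    subst this
    simp [PhiC, swphi_i Γ i htr]
  | cons p rest ih =>
    intro c hval heq
    obtain ⟨v, π⟩ := p
    have hπ : π ∈ Γ := hval (v, π) List.mem_cons_self
    rw [show ECswitchSeq (cycleFromFn 4 c) ((v, π) :: rest)
        = ECswitchSeq (ECswitch (cycleFromFn 4 c) v π) rest from rfl,
      ECswitch_cycle] at heq
    have h2 := ih _ (fun q hq => hval q (List.mem_cons_of_mem _ hq)) heq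
    rwa [PhiC_switch Γ i htr c v π hπ] at h2

lemma subClass_phi {j : Fin m} (hj : j ∈ subClass Γ i) : swphi Γ i htr j = 1 := by
  obtain ⟨L, hval, heq⟩ := hj
  have h := extract_aux Γ i htr L (fun x => if x = -1 then j else i) hval heq
  have e0 : ¬((0 : ZMod 4) = -1) := by decide
  have e1 : ¬((1 : ZMod 4) = -1) := by decide
  have e2 : ¬((2 : ZMod 4) = -1) := by decide
  have e3 : ((3 : ZMod 4) = -1) := by decide
  simp only [PhiC, if_neg e0, if_neg e1, if_neg e2, if_pos e3, swphi_i Γ i htr,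
    one_mul, inv_one, mul_one] at h
  rwa [inv_eq_one] at h

end Cycle

section Span
variable {V : Type} [Fintype V]

lemma delete_edge_connected {G : SimpleGraph V} (hG : G.Connected) {v w : V}
    (h : (G \ SimpleGraph.fromEdgeSet {s(v, w)}).Reachable v w) :
    (G \ SimpleGraph.fromEdgeSet {s(v, w)}).Connected := by
  rw [SimpleGraph.connected_iff] at hG ⊢
  refine ⟨?_, hG.2⟩
  intro a b
  obtain ⟨p⟩ := hG.1 a b
  induction p with
  | nil => exact SimpleGraph.Reachable.refl _
  | @cons x y z hadj q ih =>
    refine SimpleGraph.Reachable.trans ?_ ih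
    by_cases he : s(x, y) = s(v, w)
    · rcases Sym2.eq_iff.1 he with ⟨rfl, rfl⟩ | ⟨rfl, rfl⟩
      · exact h
      · exact h.symm
    · refine SimpleGraph.Adj.reachable ?_
      rw [SimpleGraph.sdiff_adj]
      refine ⟨hadj, ?_⟩
      rw [SimpleGraph.fromEdgeSet_adj]
      rintro ⟨hmem, -⟩
      exact he hmem

lemma exists_spanning_tree (G : SimpleGraph V) (hG : G.Connected) :
    ∃ T : SimpleGraph V, T.IsTree ∧ T ≤ G := by
  classical
  by_cases hac : G.IsAcyclic
  · exact ⟨G, ⟨hG, hac⟩, le_refl G⟩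
  · rw [SimpleGraph.isAcyclic_iff_forall_adj_isBridge] at hac
    push_neg at hac
    obtain ⟨v, w, hadj, hbr⟩ := hac
    rw [SimpleGraph.isBridge_iff] at hbr
    have hreach : (G \ SimpleGraph.fromEdgeSet {s(v, w)}).Reachable v w := by
      by_contra hr; exact hbr hr
    have hconn' := delete_edge_connected hG hreach
    have hlt : (G \ SimpleGraph.fromEdgeSet {s(v, w)}).edgeSet.ncard < G.edgeSet.ncard := by
      apply Set.ncard_lt_ncard
      · constructor
        · rw [SimpleGraph.edgeSet_sdiff]
          exact Set.diff_subset
        · intro hsub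
          have h1 : s(v, w) ∈ G.edgeSet := hadj
          have h2 := hsub h1
          rw [SimpleGraph.edgeSet_sdiff] at h2
          refine h2.2 ?_
          rw [SimpleGraph.edgeSet_fromEdgeSet]
          exact ⟨rfl, by simp [hadj.ne]⟩
      · exact Set.toFinite _
    obtain ⟨T, hT, hle⟩ := exists_spanning_tree (G \ SimpleGraph.fromEdgeSet {s(v, w)}) hconn'
    exact ⟨T, hT, hle.trans sdiff_le⟩
termination_by G.edgeSet.ncard
decreasing_by exact hlt

section Fix
variable {V : Type} [Fintype V] [DecidableEq V] {m : ℕ} (Γ : Subgroup (Perm (Fin m))) (i : Fin m)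

noncomputable def badCount (H : EC V m) : ℕ :=
  (Finset.univ.filter (fun p : V × V => (H p.1 p.2).isSome ∧ H p.1 p.2 ≠ some i)).card

variable (htr : ∀ a b : Fin m, ∃ π ∈ Γ, π a = b)

lemma fixAll : ∀ (n : ℕ) (H : EC V m), badCount i H ≤ n →
    (∀ u v, H u v = H v u) → (∀ u, H u u = none) →
    (∀ u v c, H u v = some c → swphi Γ i htr c = 1) →
    ∃ L, ValidSeq Γ L ∧ ∀ u v j, ECswitchSeq H L u v = some j → j = i := by
  intro n
  induction n with
  | zero =>
    intro H hcard _ _ _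
    refine ⟨[], fun p hp => absurd hp List.not_mem_nil, ?_⟩
    intro u v j hj
    by_contra hne
    have hmem : (u, v) ∈ Finset.univ.filter
        (fun p : V × V => (H p.1 p.2).isSome ∧ H p.1 p.2 ≠ some i) := by
      simp only [Finset.mem_filter, Finset.mem_univ, true_and]
      show (H u v).isSome ∧ H u v ≠ some i
      rw [show ECswitchSeq H [] u v = H u v from rfl] at hj
      rw [hj]
      exact ⟨rfl, fun hc => hne (Option.some_injective _ hc)⟩
    have : 0 < badCount i H := Finset.card_pos.2 ⟨(u, v), hmem⟩
    omega
  | succ n ih =>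
    intro H hcard hsymH hloopH hphiH
    by_cases h0 : badCount i H = 0
    · exact ih H (by omega) hsymH hloopH hphiH
    · obtain ⟨⟨u, v⟩, hmem⟩ := Finset.card_pos.1 (Nat.pos_of_ne_zero h0)
      simp only [Finset.mem_filter, Finset.mem_univ, true_and] at hmem
      obtain ⟨hsome, hnei⟩ := hmem
      obtain ⟨c, hc⟩ := Option.isSome_iff_exists.1 hsome
      have hci : c ≠ i := fun h => hnei (by rw [hc, h])
      have huv : u ≠ v := by
        rintro rfl
        rw [hloopH u] at hc
        exact nomatch hc
      have hphic : swphi Γ i htr c = 1 := hphiH u v c hc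
      obtain ⟨w, hwM, hwc⟩ := swphi_one_exists Γ i htr hphic
      obtain ⟨L1, hval1, hpair, hgood⟩ := realizes_of_mem_SwM Γ i huv hwM
      set H1 := ECswitchSeq H L1 with hH1
      have hH1eq : ∀ x y, H1 x y = (H x y).map (seqPerm L1 x y) := fun x y =>
        ECswitchSeq_eq H L1 x y
      have hH1uv : H1 u v = some i := by
        rw [hH1eq, hpair, hc, Option.map_some, hwc]
      have hH1vu : H1 v u = some i := by
        rw [hH1eq, seqPerm_symm, hsymH v u, hpair, hc, Option.map_some, hwc]
      have hsymH1 : ∀ x y, H1 x y = H1 y x := fun x y => by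
        rw [hH1eq, hH1eq, hsymH x y, seqPerm_symm]
      have hloopH1 : ∀ x, H1 x x = none := fun x => by
        rw [hH1eq, hloopH x]; rfl
      have hphiH1 : ∀ x y c', H1 x y = some c' → swphi Γ i htr c' = 1 := by
        intro x y c' hc'
        by_cases hp : (x = u ∧ y = v) ∨ (x = v ∧ y = u)
        · rcases hp with ⟨rfl, rfl⟩ | ⟨rfl, rfl⟩
          · rw [hH1uv] at hc'
            rw [← Option.some_injective _ hc']
            exact swphi_i Γ i htr
          · rw [hH1vu] at hc'
            rw [← Option.some_injective _ hc']
            exact swphi_i Γ i htr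
        · obtain ⟨hmemΓ, hfix⟩ := hgood x y hp
          rw [hH1eq] at hc'
          obtain ⟨c0, hc0, hmapc⟩ := Option.map_eq_some_iff.1 hc'
          rw [← hmapc, swphi_perm Γ i htr _ hmemΓ c0, hphiH x y c0 hc0, mul_one]
          exact swpsi_stab Γ i _ hfix
      have hsub : Finset.univ.filter
            (fun p : V × V => (H1 p.1 p.2).isSome ∧ H1 p.1 p.2 ≠ some i) ⊆
          Finset.univ.filter
            (fun p : V × V => (H p.1 p.2).isSome ∧ H p.1 p.2 ≠ some i) := by
        intro p hp
        simp only [Finset.mem_filter, Finset.mem_univ, true_and] at hp ⊢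
        by_cases hpp : (p.1 = u ∧ p.2 = v) ∨ (p.1 = v ∧ p.2 = u)
        · exfalso
          rcases hpp with ⟨h1, h2⟩ | ⟨h1, h2⟩ <;> rw [h1, h2] at hp
          · exact hp.2 hH1uv
          · exact hp.2 hH1vu
        · obtain ⟨hmemΓ, hfix⟩ := hgood p.1 p.2 hpp
          rw [hH1eq] at hp
          obtain ⟨c0, hc0, hmapc⟩ := Option.map_eq_some_iff.1
            (Option.isSome_iff_exists.1 hp.1).choose_spec
          rw [hc0]
          refine ⟨rfl, fun hcon => ?_⟩
          have : c0 = i := Option.some_injective _ hcon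
          subst this
          refine hp.2 ?_
          rw [hc0, Option.map_some, hfix]
      have hlt : badCount i H1 < badCount i H := by
        refine Finset.card_lt_card ?_
        refine (Finset.ssubset_iff_of_subset hsub).2 ⟨(u, v), ?_, ?_⟩
        · simp only [Finset.mem_filter, Finset.mem_univ, true_and]
          exact ⟨hsome, hnei⟩
        · simp only [Finset.mem_filter, Finset.mem_univ, true_and]
          rw [hH1uv]
          rintro ⟨-, hbad⟩
          exact hbad rfl
      obtain ⟨L2, hval2, hmono⟩ := ih H1 (by omega) hsymH1 hloopH1 hphiH1
      refine ⟨L1 ++ L2, ValidSeq_append hval1 hval2, ?_⟩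
      intro x y j hj
      rw [ECswitchSeq_append] at hj
      exact hmono x y j hj

end Fix

/-- A connected `m`-edge-coloured graph `G` admits a `Γ`-switchable
homomorphism to `K₂^i` iff `G` is bipartite and for every spanning tree `T` of `G` there
is a switching sequence making `T` monochromatic of colour `i` with every cotree edge
colour lying in the `Γ`-substitution class `⟨i⟩`. -/
theorem swhomK2_iff_spanning_tree {V : Type} [Fintype V] [DecidableEq V] {m : ℕ}
    (Γ : Subgroup (Perm (Fin m))) (htr : TransOn Γ) (G : EC V m) (hsym : ECSymm G)
    (hconn : Conn G) (i : Fin m) :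
    SwHomK2 Γ G i ↔
      (Bip G ∧ ∀ T : SimpleGraph V, T.IsTree → T ≤ ECtoSimple G hsym →
        ∃ L, ValidSeq Γ L ∧
          (∀ u v, T.Adj u v → ECswitchSeq G L u v = some i) ∧
          (∀ u v j, ¬ T.Adj u v → ECswitchSeq G L u v = some j → j ∈ subClass Γ i)) := by
  classical
  constructor
  · rintro ⟨L, hval, f, hf⟩
    constructor
    · refine ⟨f, fun u v hs => ?_⟩
      have h1 : (ECswitchSeq G L u v).isSome := by
        rw [ECswitchSeq_eq]; simpa using hs
      obtain ⟨j, hj⟩ := Option.isSome_iff_exists.1 h1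
      exact (hf u v j hj).1
    · intro T hT hle
      refine ⟨L, hval, ?_, ?_⟩
      · intro u v hadj
        have hs : (G u v).isSome := (hle hadj).2
        have h1 : (ECswitchSeq G L u v).isSome := by
          rw [ECswitchSeq_eq]; simpa using hs
        obtain ⟨j, hj⟩ := Option.isSome_iff_exists.1 h1
        rw [hj, (hf u v j hj).2]
      · intro u v j _ hj
        have hji := (hf u v j hj).2
        subst hji
        refine ⟨[], fun p hp => absurd hp List.not_mem_nil, ?_⟩
        show nearCycle 4 j j = monoCycle 4 j
        have hfn : (fun x : ZMod 4 => if x = -1 then j else j) = (fun _ : ZMod 4 => j) := by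
          funext x; exact ite_self j
        rw [nearCycle, monoCycle, hfn]
  · rintro ⟨⟨f, hbip⟩, htree⟩
    have hloop : ∀ u, G u u = none := by
      intro u
      by_contra h
      exact (hbip u u (Option.ne_none_iff_isSome.1 h)) rfl
    by_cases hne : Nonempty V
    · have hconn' : (ECtoSimple G hsym).Connected := by
        rw [SimpleGraph.connected_iff]
        refine ⟨?_, hne⟩
        intro a b
        have hr := hconn a b
        induction hr with
        | refl => exact SimpleGraph.Reachable.refl _
        | @tail x y hstep hs ih =>
          refine SimpleGraph.Reachable.trans ih ?_
          by_cases hxy : x = y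
          · subst hxy; exact SimpleGraph.Reachable.refl _
          · exact SimpleGraph.Adj.reachable ⟨hxy, hs⟩
      obtain ⟨T, hT, hle⟩ := exists_spanning_tree _ hconn'
      obtain ⟨L, hval, hTmono, hco⟩ := htree T hT hle
      set H := ECswitchSeq G L with hH
      have hsymH : ∀ u v, H u v = H v u := by
        intro u v
        rw [hH, ECswitchSeq_eq, ECswitchSeq_eq, hsym u v, seqPerm_symm]
      have hloopH : ∀ u, H u u = none := by
        intro u
        rw [hH, ECswitchSeq_eq, hloop]; rfl
      have hphiH : ∀ u v c, H u v = some c → swphi Γ i htr c = 1 := by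
        intro u v c hc
        by_cases hadj : T.Adj u v
        · have h2 := hTmono u v hadj
          rw [h2] at hc
          rw [← Option.some_injective _ hc]
          exact swphi_i Γ i htr
        · exact subClass_phi Γ i htr (hco u v c hadj hc)
      obtain ⟨L2, hval2, hmono⟩ :=
        fixAll Γ i htr (badCount i H) H le_rfl hsymH hloopH hphiH
      refine ⟨L ++ L2, ValidSeq_append hval hval2, f, ?_⟩
      intro u v j hj
      rw [ECswitchSeq_append, ← hH] at hj
      refine ⟨?_, hmono u v j hj⟩
      apply hbip u v
      have h1 : (ECswitchSeq H L2 u v).isSome := by rw [hj]; rfl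
      rw [ECswitchSeq_eq] at h1
      have h2 : (H u v).isSome := by simpa using h1
      rw [hH, ECswitchSeq_eq] at h2
      simpa using h2
    · exact ⟨[], fun p hp => absurd hp List.not_mem_nil, fun _ => true,
        fun u => absurd ⟨u⟩ hne⟩
end Span
end
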